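/- arXiv:2007.08174 — 13 statements merged into one kernel-verified Lean document; each statement's English description precedes it below -/
import Mathlib

section
/- The cohesive density ψ is Lipschitz continuous on ℝ × [0,∞): there exists a constant L ≥ 0 such that |ψ(w₁,ξ₁) − ψ(w₂,ξ₂)| ≤ L·(|w₁ − w₂| + |ξ₁ − ξ₂|) for all w₁, w₂ ∈ ℝ and all ξ₁, ξ₂ ≥ 0. -/
open Set

/-- Glue two Lipschitz estimates on `[l,c]` and `[c,∞)` into one on `[l,∞)`. -/
lemma lip_glue {f : ℝ → ℝ} {l c L : ℝ} (hlc : l ≤ c) (hL : 0 ≤ L)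
    (h1 : ∀ x ∈ Set.Icc l c, ∀ y ∈ Set.Icc l c, |f x - f y| ≤ L * |x - y|)
    (h2 : ∀ x ∈ Set.Ici c, ∀ y ∈ Set.Ici c, |f x - f y| ≤ L * |x - y|) :
    ∀ x ∈ Set.Ici l, ∀ y ∈ Set.Ici l, |f x - f y| ≤ L * |x - y| := by
  have key : ∀ x ∈ Set.Ici l, ∀ y ∈ Set.Ici l, x ≤ y → |f x - f y| ≤ L * |x - y| := by
    intro x hx y hy hxy
    by_cases hyc : y ≤ c
    · exact h1 x ⟨hx, hxy.trans hyc⟩ y ⟨hy, hyc⟩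
    by_cases hxc : c ≤ x
    · exact h2 x hxc y ((le_of_not_ge hyc))
    push_neg at hyc hxc
    have hx1 : |f x - f c| ≤ L * |x - c| := h1 x ⟨hx, hxc.le⟩ c ⟨hlc, le_refl c⟩
    have hx2 : |f c - f y| ≤ L * |c - y| := h2 c (le_refl c) y hyc.le
    have e1 : |x - c| = c - x := by rw [abs_sub_comm]; exact abs_of_nonneg (by linarith)
    have e2 : |c - y| = y - c := by rw [abs_sub_comm]; exact abs_of_nonneg (by linarith)
    have e3 : |x - y| = y - x := by rw [abs_sub_comm]; exact abs_of_nonneg (by linarith)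
    calc |f x - f y| ≤ |f x - f c| + |f c - f y| := abs_sub_le _ _ _
      _ ≤ L * |x - c| + L * |c - y| := add_le_add hx1 hx2
      _ = L * |x - y| := by rw [e1, e2, e3]; ring
  intro x hx y hy
  rcases le_total x y with h | h
  · exact key x hx y hy h
  · rw [abs_sub_comm, abs_sub_comm x y]; exact key y hy x hx h

/-- The cohesive density ψ(w,ξ) = ψ̂(|w|) if |w| ≥ ξ, and
ψ(w,ξ) = ψ̂(ξ) − ψ̂'(ξ)·(ξ² − w²)/(2ξ) if |w| < ξ. -/
noncomputable def cohesive (psih psih' : ℝ → ℝ) (w ξ : ℝ) : ℝ :=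
  if ξ ≤ |w| then psih |w| else psih ξ - psih' ξ * ((ξ ^ 2 - w ^ 2) / (2 * ξ))

set_option maxHeartbeats 1000000 in
/-- the cohesive density ψ is Lipschitz continuous on ℝ × [0,∞). -/
theorem cohesive_lipschitz
    (ξc : ℝ) (hξc : 0 < ξc) (psih psih' psih'' : ℝ → ℝ)
    (hnn : ∀ w ≥ (0:ℝ), 0 ≤ psih w)
    (hconc : ConcaveOn ℝ (Set.Ici 0) psih)
    (h0 : psih 0 = 0)
    (hpos : ∀ w > (0:ℝ), 0 < psih w)
    (hconst : ∀ w ≥ ξc, psih w = psih ξc)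
    (hC1 : ∀ w ∈ Set.Ici (0:ℝ), HasDerivWithinAt psih (psih' w) (Set.Ici 0) w)
    (hC1c : ContinuousOn psih' (Set.Ici 0))
    (hC2 : ∀ w ∈ Set.Icc (0:ℝ) ξc, HasDerivWithinAt psih' (psih'' w) (Set.Icc 0 ξc) w)
    (hC2c : ContinuousOn psih'' (Set.Icc 0 ξc)) :
    ∃ L : ℝ, 0 ≤ L ∧ ∀ w₁ w₂ ξ₁ ξ₂ : ℝ, 0 ≤ ξ₁ → 0 ≤ ξ₂ →
      |cohesive psih psih' w₁ ξ₁ - cohesive psih psih' w₂ ξ₂| ≤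
        L * (|w₁ - w₂| + |ξ₁ - ξ₂|) := by
  -- bounds on the derivatives
  obtain ⟨M1, hM1⟩ := (isCompact_Icc (a := (0:ℝ)) (b := ξc)).exists_bound_of_continuousOn
    (hC1c.mono Set.Icc_subset_Ici_self)
  obtain ⟨M2, hM2⟩ := (isCompact_Icc (a := (0:ℝ)) (b := ξc)).exists_bound_of_continuousOn hC2c
  have hM1n : 0 ≤ M1 := le_trans (norm_nonneg _) (hM1 0 ⟨le_refl _, hξc.le⟩)
  have hM2n : 0 ≤ M2 := le_trans (norm_nonneg _) (hM2 0 ⟨le_refl _, hξc.le⟩)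
  -- the derivative vanishes on [ξc, ∞)
  have hz : ∀ ξ, ξc ≤ ξ → psih' ξ = 0 := by
    intro ξ hξ
    have hξ0 : (0:ℝ) ≤ ξ := hξc.le.trans hξ
    have h1 : HasDerivWithinAt psih (psih' ξ) (Set.Ici ξc) ξ :=
      (hC1 ξ hξ0).mono (Set.Ici_subset_Ici.mpr hξc.le)
    have h2 : HasDerivWithinAt psih 0 (Set.Ici ξc) ξ := by
      refine (hasDerivWithinAt_const ξ _ (psih ξc)).congr (fun y hy => hconst y hy) (hconst ξ hξ)
    have hu : UniqueDiffWithinAt ℝ (Set.Ici ξc) ξ := (uniqueDiffOn_Ici ξc) ξ hξ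
    rw [← h1.derivWithin hu, h2.derivWithin hu]
  have hb1 : ∀ x, 0 ≤ x → |psih' x| ≤ M1 := by
    intro x hx
    by_cases hxc : x ≤ ξc
    · simpa using hM1 x ⟨hx, hxc⟩
    · rw [hz x (le_of_not_ge hxc)]; simpa using hM1n
  -- psih is M1-Lipschitz on [0,∞)
  have hpsilip : ∀ x, 0 ≤ x → ∀ y, 0 ≤ y → |psih x - psih y| ≤ M1 * |x - y| := by
    intro x hx y hy
    have := (convex_Ici (0:ℝ)).norm_image_sub_le_of_norm_hasDerivWithin_le hC1
      (fun z hz' => by simpa using hb1 z hz') hy hx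
    simpa [Real.norm_eq_abs] using this
  set L2 : ℝ := 2 * M1 + M2 * (ξc / 2) with hL2def
  have hL2n : 0 ≤ L2 := by positivity
  have hM1L2 : M1 ≤ L2 := by
    have hprod : 0 ≤ M2 * (ξc / 2) := mul_nonneg hM2n (le_of_lt (half_pos hξc))
    rw [hL2def]; linarith
  -- Lipschitz in w, uniformly in ξ
  have lipW : ∀ ξ, 0 ≤ ξ → ∀ w₁ w₂ : ℝ,
      |cohesive psih psih' w₁ ξ - cohesive psih psih' w₂ ξ| ≤ M1 * |w₁ - w₂| := by
    intro ξ hξ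
    set g : ℝ → ℝ := fun a => if ξ ≤ a then psih a else
      psih ξ - psih' ξ * ((ξ ^ 2 - a ^ 2) / (2 * ξ)) with hgdef
    have hg : ∀ w : ℝ, cohesive psih psih' w ξ = g |w| := by
      intro w; simp only [cohesive, hgdef, sq_abs]
    have key : ∀ a ∈ Set.Ici (0:ℝ), ∀ b ∈ Set.Ici (0:ℝ), |g a - g b| ≤ M1 * |a - b| := by
      rcases eq_or_lt_of_le hξ with h0 | h0
      · intro a ha b hb
        have ea : g a = psih a := if_pos (h0 ▸ ha)
        have eb : g b = psih b := if_pos (h0 ▸ hb)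
        rw [ea, eb]; exact hpsilip a ha b hb
      · apply lip_glue hξ hM1n
        · -- on [0, ξ] : quadratic formula
          set q : ℝ → ℝ := fun a => psih ξ - psih' ξ * ((ξ ^ 2 - a ^ 2) / (2 * ξ)) with hqdef
          have hgq : ∀ a ∈ Set.Icc (0:ℝ) ξ, g a = q a := by
            intro a ⟨ha0, haξ⟩
            by_cases hcase : ξ ≤ a
            · have : a = ξ := le_antisymm haξ hcase
              subst this
              simp [hgdef, hqdef]
            · simp [hgdef, hqdef, hcase]
          have hξne : ξ ≠ 0 := ne_of_gt h0
          have hq : ∀ a ∈ Set.Icc (0:ℝ) ξ,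
              HasDerivWithinAt q (psih' ξ * a / ξ) (Set.Icc 0 ξ) a := by
            intro a _
            have h1 : HasDerivAt (fun a : ℝ => ξ ^ 2 - a ^ 2) (-(2 * a)) a := by
              simpa using (hasDerivAt_pow 2 a).const_sub (ξ ^ 2)
            have h2 : HasDerivAt q (-(psih' ξ * (-(2 * a) / (2 * ξ)))) a := by
              simpa [hqdef] using (((h1.div_const (2 * ξ)).const_mul (psih' ξ)).const_sub (psih ξ))
            have : -(psih' ξ * (-(2 * a) / (2 * ξ))) = psih' ξ * a / ξ := by
              field_simp
            exact (this ▸ h2).hasDerivWithinAt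
          have hqb : ∀ a ∈ Set.Icc (0:ℝ) ξ, ‖psih' ξ * a / ξ‖ ≤ M1 := by
            intro a ⟨ha0, haξ⟩
            rw [Real.norm_eq_abs, abs_div, abs_mul, abs_of_nonneg ha0, abs_of_pos h0]
            rw [div_le_iff₀ h0]
            calc |psih' ξ| * a ≤ M1 * ξ := by
                  apply mul_le_mul (hb1 ξ hξ) haξ ha0 hM1n
              _ = M1 * ξ := rfl
          intro x hx y hy
          rw [hgq x hx, hgq y hy]
          have := (convex_Icc (0:ℝ) ξ).norm_image_sub_le_of_norm_hasDerivWithin_le hq hqb hy hx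
          simpa [Real.norm_eq_abs] using this
        · -- on [ξ, ∞) : g = psih
          intro x hx y hy
          have ex : g x = psih x := if_pos hx
          have ey : g y = psih y := if_pos hy
          rw [ex, ey]
          exact hpsilip x (hξ.trans hx) y (hξ.trans hy)
    intro w₁ w₂
    rw [hg, hg]
    refine (key _ (abs_nonneg w₁) _ (abs_nonneg w₂)).trans ?_
    exact mul_le_mul_of_nonneg_left (abs_abs_sub_abs_le_abs_sub _ _) hM1n
  -- Lipschitz in ξ, uniformly in w
  have lipX : ∀ w : ℝ, ∀ ξ₁, 0 ≤ ξ₁ → ∀ ξ₂, 0 ≤ ξ₂ →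
      |cohesive psih psih' w ξ₁ - cohesive psih psih' w ξ₂| ≤ L2 * |ξ₁ - ξ₂| := by
    intro w
    set a : ℝ := |w| with hadef
    have ha : 0 ≤ a := abs_nonneg w
    set h : ℝ → ℝ := fun ξ => if ξ ≤ a then psih a else
      psih ξ - psih' ξ * ((ξ ^ 2 - a ^ 2) / (2 * ξ)) with hhdef
    have hcoh : ∀ ξ : ℝ, cohesive psih psih' w ξ = h ξ := by
      intro ξ; simp only [cohesive, hhdef, hadef, sq_abs]
    by_cases hac : ξc ≤ a
    · -- everything constant
      have hcst : ∀ ξ, 0 ≤ ξ → h ξ = psih ξc := by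
        intro ξ hξ
        by_cases hξa : ξ ≤ a
        · simp [hhdef, hξa, hconst a hac]
        · have haξ : a < ξ := lt_of_not_ge hξa
          have hξc' : ξc ≤ ξ := hac.trans haξ.le
          simp [hhdef, hξa, hz ξ hξc', hconst ξ hξc']
      intro ξ₁ h1 ξ₂ h2
      rw [hcoh, hcoh, hcst ξ₁ h1, hcst ξ₂ h2, sub_self, abs_zero]
      positivity
    · push_neg at hac
      have key : ∀ x ∈ Set.Ici (0:ℝ), ∀ y ∈ Set.Ici (0:ℝ), |h x - h y| ≤ L2 * |x - y| := by
        apply lip_glue ha hL2n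
        · -- on [0,a] : constant
          intro x hx y hy
          have ex : h x = psih a := if_pos hx.2
          have ey : h y = psih a := if_pos hy.2
          rw [ex, ey, sub_self, abs_zero]; positivity
        · apply lip_glue hac.le hL2n
          · -- on [a, ξc] : the nontrivial piece
            have hsub1 : Set.Icc a ξc ⊆ Set.Icc 0 ξc := Set.Icc_subset_Icc_left ha
            rcases eq_or_lt_of_le ha with ha0 | ha0
            · -- a = 0 : h coincides with ξ ↦ psih ξ - psih' ξ * (ξ/2) on [0, ξc] = [a, ξc]
              set r : ℝ → ℝ := fun ξ => psih ξ - psih' ξ * (ξ / 2) with hrdef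
              have ha0' : a = 0 := ha0.symm
              have hhr : ∀ ξ ∈ Set.Icc a ξc, h ξ = r ξ := by
                intro ξ hmem
                obtain ⟨hξa, hξc'⟩ := hmem
                by_cases hcase : ξ ≤ a
                · have hξ0 : ξ = 0 := le_antisymm (hcase.trans_eq ha0') (ha0' ▸ hξa)
                  simp [hhdef, hrdef, hξ0, ha0', h0]
                · have hcase0 : ¬ ξ ≤ 0 := by rw [ha0'] at hcase; exact hcase
                  have hξpos : 0 < ξ := lt_of_not_ge hcase0
                  have heq : (ξ ^ 2 - a ^ 2) / (2 * ξ) = ξ / 2 := by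
                    rw [ha0']
                    field_simp
                    ring
                  simp [hhdef, hrdef, hcase, heq]
              have hr : ∀ ξ ∈ Set.Icc a ξc,
                  HasDerivWithinAt r (psih' ξ - (psih'' ξ * (ξ / 2) + psih' ξ * (1 / 2)))
                    (Set.Icc a ξc) ξ := by
                intro ξ hξ
                have hd1 : HasDerivWithinAt psih (psih' ξ) (Set.Icc a ξc) ξ :=
                  (hC1 ξ (hsub1 hξ).1).mono (fun z hz' => (hsub1 hz').1)
                have hd2 : HasDerivWithinAt psih' (psih'' ξ) (Set.Icc a ξc) ξ :=
                  (hC2 ξ (hsub1 hξ)).mono hsub1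
                have hd3 : HasDerivWithinAt (fun ξ : ℝ => ξ / 2) (1 / 2) (Set.Icc a ξc) ξ :=
                  ((hasDerivAt_id ξ).div_const 2).hasDerivWithinAt
                exact hd1.sub (hd2.mul hd3)
              have hrb : ∀ ξ ∈ Set.Icc a ξc,
                  ‖psih' ξ - (psih'' ξ * (ξ / 2) + psih' ξ * (1 / 2))‖ ≤ L2 := by
                intro ξ hξ
                have h1' : |psih' ξ| ≤ M1 := hb1 ξ (hsub1 hξ).1
                have h2' : |psih'' ξ| ≤ M2 := by simpa using hM2 ξ (hsub1 hξ)
                have hξ2 : 0 ≤ ξ / 2 := by linarith [(hsub1 hξ).1]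
                have hξ2' : ξ / 2 ≤ ξc / 2 := by linarith [(hsub1 hξ).2]
                rw [Real.norm_eq_abs]
                have : |psih' ξ - (psih'' ξ * (ξ / 2) + psih' ξ * (1 / 2))| ≤
                    |psih' ξ| + (|psih'' ξ| * (ξ / 2) + |psih' ξ| * (1 / 2)) := by
                  calc |psih' ξ - (psih'' ξ * (ξ / 2) + psih' ξ * (1 / 2))|
                      ≤ |psih' ξ| + |psih'' ξ * (ξ / 2) + psih' ξ * (1 / 2)| := abs_sub _ _
                    _ ≤ |psih' ξ| + (|psih'' ξ * (ξ / 2)| + |psih' ξ * (1 / 2)|) := by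
                        gcongr; exact abs_add_le _ _
                    _ = |psih' ξ| + (|psih'' ξ| * (ξ / 2) + |psih' ξ| * (1 / 2)) := by
                        rw [abs_mul, abs_mul, abs_of_nonneg hξ2]
                        norm_num
                apply this.trans
                rw [hL2def]
                nlinarith [mul_le_mul h2' hξ2' hξ2 hM2n]
              intro x hx y hy
              rw [hhr x hx, hhr y hy]
              have := (convex_Icc a ξc).norm_image_sub_le_of_norm_hasDerivWithin_le hr hrb hy hx
              simpa [Real.norm_eq_abs] using this
            · -- 0 < a : use the honest quotient
              set q : ℝ → ℝ := fun ξ => psih ξ - psih' ξ * ((ξ ^ 2 - a ^ 2) / (2 * ξ)) with hqdef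
              have hhq : ∀ ξ ∈ Set.Icc a ξc, h ξ = q ξ := by
                intro ξ hmem
                obtain ⟨hξa, hξc'⟩ := hmem
                by_cases hcase : ξ ≤ a
                · have : ξ = a := le_antisymm hcase hξa
                  subst this
                  simp [hhdef, hqdef]
                · simp [hhdef, hqdef, hcase]
              have hq : ∀ ξ ∈ Set.Icc a ξc,
                  HasDerivWithinAt q
                    (psih' ξ - (psih'' ξ * ((ξ ^ 2 - a ^ 2) / (2 * ξ)) +
                      psih' ξ * ((2 * ξ * (2 * ξ) - (ξ ^ 2 - a ^ 2) * 2) / (2 * ξ) ^ 2)))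
                    (Set.Icc a ξc) ξ := by
                intro ξ hξ
                have hξpos : 0 < ξ := lt_of_lt_of_le ha0 hξ.1
                have hsub1' := hsub1
                have hd1 : HasDerivWithinAt psih (psih' ξ) (Set.Icc a ξc) ξ :=
                  (hC1 ξ (hsub1 hξ).1).mono (fun z hz' => (hsub1 hz').1)
                have hd2 : HasDerivWithinAt psih' (psih'' ξ) (Set.Icc a ξc) ξ :=
                  (hC2 ξ (hsub1 hξ)).mono hsub1
                have hnum : HasDerivAt (fun ξ : ℝ => ξ ^ 2 - a ^ 2) (2 * ξ) ξ := by
                  simpa using (hasDerivAt_pow 2 ξ).sub_const (a ^ 2)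
                have hden : HasDerivAt (fun ξ : ℝ => 2 * ξ) 2 ξ := by
                  simpa using (hasDerivAt_id ξ).const_mul (2:ℝ)
                have hdu : HasDerivAt (fun ξ : ℝ => (ξ ^ 2 - a ^ 2) / (2 * ξ))
                    ((2 * ξ * (2 * ξ) - (ξ ^ 2 - a ^ 2) * 2) / (2 * ξ) ^ 2) ξ :=
                  hnum.div hden (mul_pos two_pos hξpos).ne'
                exact hd1.sub (hd2.mul hdu.hasDerivWithinAt)
              have hqb : ∀ ξ ∈ Set.Icc a ξc,
                  ‖psih' ξ - (psih'' ξ * ((ξ ^ 2 - a ^ 2) / (2 * ξ)) +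
                    psih' ξ * ((2 * ξ * (2 * ξ) - (ξ ^ 2 - a ^ 2) * 2) / (2 * ξ) ^ 2))‖ ≤ L2 := by
                intro ξ hξ
                have hξpos : 0 < ξ := lt_of_lt_of_le ha0 hξ.1
                have h1' : |psih' ξ| ≤ M1 := hb1 ξ (hsub1 hξ).1
                have h2' : |psih'' ξ| ≤ M2 := by simpa using hM2 ξ (hsub1 hξ)
                set u : ℝ := (ξ ^ 2 - a ^ 2) / (2 * ξ) with hudef
                set v : ℝ := (2 * ξ * (2 * ξ) - (ξ ^ 2 - a ^ 2) * 2) / (2 * ξ) ^ 2 with hvdef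
                have hu0 : 0 ≤ u := by
                  apply div_nonneg _ (by positivity)
                  nlinarith [hξ.1, ha0]
                have huc : u ≤ ξc / 2 := by
                  rw [hudef, div_le_iff₀ (by positivity)]
                  nlinarith [hξ.1, hξ.2, ha0]
                have hv0 : 0 ≤ v := by
                  apply div_nonneg _ (by positivity)
                  nlinarith [hξ.1, ha0]
                have hv1 : v ≤ 1 := by
                  rw [hvdef, div_le_one (by positivity)]
                  nlinarith [hξ.1, ha0]
                rw [Real.norm_eq_abs]
                have habs : |psih' ξ - (psih'' ξ * u + psih' ξ * v)| ≤
                    |psih' ξ| + (|psih'' ξ| * u + |psih' ξ| * v) := by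
                  calc |psih' ξ - (psih'' ξ * u + psih' ξ * v)|
                      ≤ |psih' ξ| + |psih'' ξ * u + psih' ξ * v| := abs_sub _ _
                    _ ≤ |psih' ξ| + (|psih'' ξ * u| + |psih' ξ * v|) := by
                        gcongr; exact abs_add_le _ _
                    _ = |psih' ξ| + (|psih'' ξ| * u + |psih' ξ| * v) := by
                        rw [abs_mul, abs_mul, abs_of_nonneg hu0, abs_of_nonneg hv0]
                apply habs.trans
                rw [hL2def]
                nlinarith [mul_le_mul h2' huc hu0 hM2n, mul_le_mul h1' hv1 hv0 hM1n]
              intro x hx y hy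
              rw [hhq x hx, hhq y hy]
              have := (convex_Icc a ξc).norm_image_sub_le_of_norm_hasDerivWithin_le hq hqb hy hx
              simpa [Real.norm_eq_abs] using this
          · -- on [ξc, ∞) : constant psih ξc
            intro x hx y hy
            have hcst : ∀ z : ℝ, ξc ≤ z → h z = psih ξc := by
              intro z hzc
              have hza : ¬ z ≤ a := fun hh => absurd (hzc.trans hh) (not_le.mpr hac)
              simp [hhdef, hza, hz z hzc, hconst z hzc]
            rw [hcst x hx, hcst y hy, sub_self, abs_zero]; positivity
      intro ξ₁ h1 ξ₂ h2
      rw [hcoh, hcoh]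
      exact key ξ₁ h1 ξ₂ h2
  -- combine
  refine ⟨L2, hL2n, ?_⟩
  intro w₁ w₂ ξ₁ ξ₂ h1 h2
  calc |cohesive psih psih' w₁ ξ₁ - cohesive psih psih' w₂ ξ₂|
      ≤ |cohesive psih psih' w₁ ξ₁ - cohesive psih psih' w₂ ξ₁| +
        |cohesive psih psih' w₂ ξ₁ - cohesive psih psih' w₂ ξ₂| := abs_sub_le _ _ _
    _ ≤ M1 * |w₁ - w₂| + L2 * |ξ₁ - ξ₂| := add_le_add (lipW ξ₁ h1 w₁ w₂) (lipX w₂ ξ₁ h1 ξ₂ h2)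
    _ ≤ L2 * (|w₁ - w₂| + |ξ₁ - ξ₂|) := by
        have := abs_nonneg (w₁ - w₂)
        have := abs_nonneg (ξ₁ - ξ₂)
        nlinarith
end

section
/- For every (w,ξ) ∈ ℝ × [0,∞) with (w,ξ) ≠ (0,0), the function w' ↦ ψ(w',ξ) is differentiable at w, with derivative ∂_wψ(w,ξ) = (ψ̂'(ξ)/ξ)·w if |w| < ξ, and ∂_wψ(w,ξ) = ψ̂'(|w|)·sign(w) if |w| ≥ ξ (with sign(0) = 0). Moreover the map (w,ξ) ↦ ∂_wψ(w,ξ) is continuous on (ℝ × [0,∞)) \ {(0,0)}. -/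
/-- The partial derivative ∂_wψ(w,ξ): (ψ̂'(ξ)/ξ)·w if |w| < ξ, and
ψ̂'(|w|)·sign(w) if |w| ≥ ξ (with sign 0 = 0). -/
noncomputable def dpsiw (psih' : ℝ → ℝ) (w ξ : ℝ) : ℝ :=
  if |w| < ξ then psih' ξ / ξ * w else psih' |w| * Real.sign w

lemma sign_eq_div' (w : ℝ) (hw : w ≠ 0) : Real.sign w = w / |w| := by
  rcases hw.lt_or_gt with h|h
  · rw [Real.sign_of_neg h, abs_of_neg h]; field_simp
  · rw [Real.sign_of_pos h, abs_of_pos h]; field_simp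

/-- away from the origin, ψ(·,ξ) is differentiable in w with derivative
∂_wψ, and ∂_wψ is continuous on (ℝ × [0,∞)) \ {(0,0)}. -/
theorem cohesive_hasDerivAt_w
    (ξc : ℝ) (hξc : 0 < ξc) (psih psih' psih'' : ℝ → ℝ)
    (hnn : ∀ w ≥ (0:ℝ), 0 ≤ psih w)
    (hconc : ConcaveOn ℝ (Set.Ici 0) psih)
    (h0 : psih 0 = 0)
    (hpos : ∀ w > (0:ℝ), 0 < psih w)
    (hconst : ∀ w ≥ ξc, psih w = psih ξc)
    (hC1 : ∀ w ∈ Set.Ici (0:ℝ), HasDerivWithinAt psih (psih' w) (Set.Ici 0) w)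
    (hC1c : ContinuousOn psih' (Set.Ici 0))
    (hC2 : ∀ w ∈ Set.Icc (0:ℝ) ξc, HasDerivWithinAt psih' (psih'' w) (Set.Icc 0 ξc) w)
    (hC2c : ContinuousOn psih'' (Set.Icc 0 ξc)) :
    (∀ w ξ : ℝ, 0 ≤ ξ → (w, ξ) ≠ ((0:ℝ), (0:ℝ)) →
        HasDerivAt (fun w' => cohesive psih psih' w' ξ) (dpsiw psih' w ξ) w) ∧
    ContinuousOn (fun p : ℝ × ℝ => dpsiw psih' p.1 p.2)
      ({p : ℝ × ℝ | 0 ≤ p.2} \ {((0:ℝ), (0:ℝ))}) := by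
  have hpsih : ∀ x : ℝ, 0 < x → HasDerivAt psih (psih' x) x := fun x hx =>
    (hC1 x hx.le).hasDerivAt (Ici_mem_nhds hx)
  have hquad : ∀ ξ : ℝ, 0 < ξ → ∀ w : ℝ,
      HasDerivAt (fun w' => psih ξ - psih' ξ * ((ξ ^ 2 - w' ^ 2) / (2 * ξ)))
        (psih' ξ / ξ * w) w := by
    intro ξ hξ w
    have h2 : HasDerivAt (fun w' : ℝ => w' ^ 2) (2 * w) w := by
      simpa [mul_comm] using hasDerivAt_pow 2 w
    have h3 := (((h2.const_sub (ξ ^ 2)).div_const (2 * ξ)).const_mul (psih' ξ)).const_sub (psih ξ)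
    have e : psih' ξ / ξ * w = -(psih' ξ * (-(2 * w) / (2 * ξ))) := by
      rw [neg_div, mul_neg, neg_neg, mul_div_mul_left _ _ (two_ne_zero' ℝ)]; ring
    rw [e]; exact h3
  have habs : ∀ w : ℝ, w ≠ 0 →
      HasDerivAt (fun w' => psih |w'|) (psih' |w| * Real.sign w) w := by
    intro w hw
    rcases hw.lt_or_gt with h|h
    · have h1 : HasDerivAt (fun w' : ℝ => psih (-w')) (psih' (-w) * (-1)) w := by
        have := (hpsih (-w) (by linarith)).comp w (hasDerivAt_neg w)
        simpa [mul_comm, Function.comp_def] using this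
      rw [abs_of_neg h, Real.sign_of_neg h]
      refine h1.congr_of_eventuallyEq ?_
      filter_upwards [Iio_mem_nhds h] with x hx
      rw [abs_of_neg hx]
    · have h1 : HasDerivAt psih (psih' w) w := hpsih w h
      rw [abs_of_pos h, Real.sign_of_pos h, mul_one]
      refine h1.congr_of_eventuallyEq ?_
      filter_upwards [Ioi_mem_nhds h] with x hx
      rw [abs_of_pos hx]
  -- boundary key lemma, right endpoint w = ξ
  have key1 : ∀ ξ : ℝ, 0 < ξ →
      HasDerivAt (fun w' => cohesive psih psih' w' ξ) (dpsiw psih' ξ ξ) ξ := by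
    intro ξ hξpos
    have hright : HasDerivWithinAt (fun w' => cohesive psih psih' w' ξ) (psih' ξ)
        (Set.Ici ξ) ξ := by
      refine (hpsih ξ hξpos).hasDerivWithinAt.congr ?_ ?_
      · intro y hy
        have hy' : ξ ≤ y := hy
        have hy0 : 0 < y := lt_of_lt_of_le hξpos hy'
        rw [cohesive, abs_of_pos hy0, if_pos hy']
      · rw [cohesive, abs_of_pos hξpos, if_pos le_rfl]
    have hq := (hquad ξ hξpos ξ).hasDerivWithinAt (s := Set.Icc 0 ξ)
    have heqon : ∀ y ∈ Set.Icc (0:ℝ) ξ, cohesive psih psih' y ξ =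
        psih ξ - psih' ξ * ((ξ ^ 2 - y ^ 2) / (2 * ξ)) := by
      intro y hy
      rcases hy.2.lt_or_eq with h | h
      · rw [cohesive, if_neg (not_le.mpr (by rwa [abs_of_nonneg hy.1]))]
      · subst h
        rw [cohesive, abs_of_nonneg hy.1, if_pos le_rfl]
        have : (y ^ 2 - y ^ 2) / (2 * y) = 0 := by simp
        rw [this, mul_zero, sub_zero]
    have hleft0 : HasDerivWithinAt (fun w' => cohesive psih psih' w' ξ)
        (psih' ξ / ξ * ξ) (Set.Icc 0 ξ) ξ :=
      hq.congr heqon (heqon ξ ⟨hξpos.le, le_rfl⟩)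
    have hleft : HasDerivWithinAt (fun w' => cohesive psih psih' w' ξ)
        (psih' ξ / ξ * ξ) (Set.Iic ξ) ξ := by
      refine hleft0.mono_of_mem_nhdsWithin ?_
      rw [show Set.Icc (0:ℝ) ξ = Set.Ici 0 ∩ Set.Iic ξ from (Set.Ici_inter_Iic).symm]
      exact Filter.inter_mem (mem_nhdsWithin_of_mem_nhds (Ici_mem_nhds hξpos))
        self_mem_nhdsWithin
    rw [div_mul_cancel₀ _ hξpos.ne'] at hleft
    have hu := hleft.union hright
    rw [Set.Iic_union_Ici] at hu
    have hder := hu.hasDerivAt (by simp)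
    have hval : dpsiw psih' ξ ξ = psih' ξ := by
      rw [dpsiw, if_neg (by rw [abs_of_pos hξpos]; exact lt_irrefl ξ),
        abs_of_pos hξpos, Real.sign_of_pos hξpos, mul_one]
    rwa [hval]
  -- boundary key lemma, left endpoint w = -ξ
  have key2 : ∀ ξ : ℝ, 0 < ξ →
      HasDerivAt (fun w' => cohesive psih psih' w' ξ) (dpsiw psih' (-ξ) ξ) (-ξ) := by
    intro ξ hξpos
    have hne0 : (-ξ) ≠ 0 := by intro h; nlinarith [neg_eq_zero.mp h]
    have hleft : HasDerivWithinAt (fun w' => cohesive psih psih' w' ξ)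
        (psih' ξ * Real.sign (-ξ)) (Set.Iic (-ξ)) (-ξ) := by
      have h1 := (habs (-ξ) hne0).hasDerivWithinAt (s := Set.Iic (-ξ))
      rw [abs_neg, abs_of_pos hξpos] at h1
      have heqon : ∀ y ∈ Set.Iic (-ξ), cohesive psih psih' y ξ = psih |y| := by
        intro y hy
        have hy' : y ≤ -ξ := hy
        have : ξ ≤ |y| := by rw [abs_of_nonpos (by linarith)]; linarith
        rw [cohesive, if_pos this]
      exact h1.congr heqon (heqon (-ξ) Set.self_mem_Iic)
    have hq := (hquad ξ hξpos (-ξ)).hasDerivWithinAt (s := Set.Icc (-ξ) 0)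
    have heqon : ∀ y ∈ Set.Icc (-ξ) (0:ℝ), cohesive psih psih' y ξ =
        psih ξ - psih' ξ * ((ξ ^ 2 - y ^ 2) / (2 * ξ)) := by
      intro y hy
      rcases hy.1.lt_or_eq with h | h
      · have hlt : |y| < ξ := by rw [abs_of_nonpos hy.2]; linarith
        rw [cohesive, if_neg (not_le.mpr hlt)]
      · rw [← h, cohesive, abs_neg, abs_of_pos hξpos, if_pos le_rfl]
        have : (ξ ^ 2 - (-ξ) ^ 2) / (2 * ξ) = 0 := by
          rw [neg_pow]; simp
        rw [this, mul_zero, sub_zero]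
    have hright0 : HasDerivWithinAt (fun w' => cohesive psih psih' w' ξ)
        (psih' ξ / ξ * (-ξ)) (Set.Icc (-ξ) 0) (-ξ) :=
      hq.congr heqon (heqon (-ξ) ⟨le_rfl, by linarith⟩)
    have hright : HasDerivWithinAt (fun w' => cohesive psih psih' w' ξ)
        (psih' ξ / ξ * (-ξ)) (Set.Ici (-ξ)) (-ξ) := by
      refine hright0.mono_of_mem_nhdsWithin ?_
      rw [show Set.Icc (-ξ) (0:ℝ) = Set.Ici (-ξ) ∩ Set.Iic 0 from (Set.Ici_inter_Iic).symm]
      exact Filter.inter_mem self_mem_nhdsWithin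
        (mem_nhdsWithin_of_mem_nhds (Iic_mem_nhds (by linarith)))
    have hd : psih' ξ / ξ * (-ξ) = psih' ξ * Real.sign (-ξ) := by
      rw [Real.sign_of_neg (by linarith)]
      field_simp
    rw [hd] at hright
    have hu := hleft.union hright
    rw [Set.Iic_union_Ici] at hu
    have hder := hu.hasDerivAt (by simp)
    have hval : dpsiw psih' (-ξ) ξ = psih' ξ * Real.sign (-ξ) := by
      rw [dpsiw, if_neg (by rw [abs_neg, abs_of_pos hξpos]; exact lt_irrefl ξ),
        abs_neg, abs_of_pos hξpos]
    rwa [hval]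
  constructor
  · intro w ξ hξ hne
    rcases lt_trichotomy |w| ξ with hlt | heq | hgt
    · have hξpos : 0 < ξ := lt_of_le_of_lt (abs_nonneg w) hlt
      have hev : (fun w' => cohesive psih psih' w' ξ) =ᶠ[nhds w]
          (fun w' => psih ξ - psih' ξ * ((ξ ^ 2 - w' ^ 2) / (2 * ξ))) := by
        filter_upwards [(isOpen_lt continuous_abs continuous_const).mem_nhds hlt] with x hx
        simp only [cohesive, if_neg (not_le.mpr hx)]
      rw [dpsiw, if_pos hlt]
      exact (hquad ξ hξpos w).congr_of_eventuallyEq hev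
    · have hξpos : 0 < ξ := by
        rcases hξ.lt_or_eq with h | h
        · exact h
        · exfalso; apply hne
          have : w = 0 := abs_eq_zero.mp (by rw [heq, ← h])
          simp [this, ← h]
      rcases (abs_eq hξ).mp heq with hw | hw
      · rw [hw]; exact key1 ξ hξpos
      · rw [hw]; exact key2 ξ hξpos
    · have hw : w ≠ 0 := by
        intro h; rw [h] at hgt; simp at hgt; linarith
      have hev : (fun w' => cohesive psih psih' w' ξ) =ᶠ[nhds w]
          (fun w' => psih |w'|) := by
        filter_upwards [(isOpen_lt continuous_const continuous_abs).mem_nhds hgt] with x hx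
        simp only [cohesive, if_pos hx.le]
      rw [dpsiw, if_neg (not_lt.mpr hgt.le)]
      exact (habs w hw).congr_of_eventuallyEq hev
  · set S := ({p : ℝ × ℝ | 0 ≤ p.2} \ {((0:ℝ), (0:ℝ))}) with hS
    have hmaxpos : ∀ p ∈ S, 0 < max |p.1| p.2 := by
      rintro ⟨w, ξ⟩ ⟨h1, h2⟩
      simp only [Set.mem_setOf_eq] at h1
      rcases h1.lt_or_eq with h | h
      · exact lt_max_of_lt_right h
      · have hw : w ≠ 0 := by
          intro hw0; exact h2 (by simp [hw0, ← h])
        exact lt_max_of_lt_left (abs_pos.mpr hw)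
    have hF : ContinuousOn (fun p : ℝ × ℝ => psih' (max |p.1| p.2) * (p.1 / max |p.1| p.2)) S := by
      have hm : ContinuousOn (fun p : ℝ × ℝ => max |p.1| p.2) S :=
        ((continuous_abs.comp continuous_fst).max continuous_snd).continuousOn
      have hc1 : ContinuousOn (fun p : ℝ × ℝ => psih' (max |p.1| p.2)) S := by
        refine hC1c.comp hm ?_
        intro p hp
        exact (hmaxpos p hp).le
      exact hc1.mul (continuousOn_fst.div hm (fun p hp => (hmaxpos p hp).ne'))
    refine ContinuousOn.congr hF ?_
    rintro ⟨w, ξ⟩ hp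
    rcases lt_or_ge |w| ξ with h | h
    · have hmw : max |w| ξ = ξ := max_eq_right h.le
      simp only [dpsiw, if_pos h, hmw]
      ring
    · have hmw : max |w| ξ = |w| := max_eq_left h
      have hw : w ≠ 0 := by
        intro hw0
        rw [hw0] at h hmw
        simp only [abs_zero] at h
        exact hp.2 (by simp [hw0, le_antisymm h hp.1])
      simp only [dpsiw, if_neg (not_lt.mpr h), hmw, sign_eq_div' w hw]
end

section
/- For every fixed w ∈ ℝ, the map ξ ↦ ψ(w,ξ) is monotone nondecreasing on [0,∞). -/
open Set

lemma aux_monotone (ψ ψ' ψ'' q q' : ℝ → ℝ) (a c : ℝ)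
    (hψc : ContinuousOn ψ (Icc a c)) (hψ'c : ContinuousOn ψ' (Icc a c))
    (hqc : ContinuousOn q (Icc a c))
    (hdψ : ∀ x ∈ Ioo a c, HasDerivAt ψ (ψ' x) x)
    (hdψ' : ∀ x ∈ Ioo a c, HasDerivAt ψ' (ψ'' x) x)
    (hdq : ∀ x ∈ Ioo a c, HasDerivAt q (q' x) x)
    (hpos : ∀ x ∈ Ioo a c, 0 ≤ ψ' x - (ψ'' x * q x + ψ' x * q' x)) :
    MonotoneOn (fun ξ => ψ ξ - ψ' ξ * q ξ) (Icc a c) := by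
  apply monotoneOn_of_hasDerivWithinAt_nonneg (convex_Icc a c)
    (f' := fun x => ψ' x - (ψ'' x * q x + ψ' x * q' x))
    (hψc.sub (hψ'c.mul hqc))
  · rw [interior_Icc]
    intro x hx
    exact ((hdψ x hx).sub ((hdψ' x hx).mul (hdq x hx))).hasDerivWithinAt
  · rw [interior_Icc]
    exact fun x hx => hpos x hx



/-- for every fixed w, ξ ↦ ψ(w,ξ) is nondecreasing on [0,∞). -/
theorem cohesive_monotone_xi
    (ξc : ℝ) (hξc : 0 < ξc) (psih psih' psih'' : ℝ → ℝ)
    (hnn : ∀ w ≥ (0:ℝ), 0 ≤ psih w)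
    (hconc : ConcaveOn ℝ (Set.Ici 0) psih)
    (h0 : psih 0 = 0)
    (hpos : ∀ w > (0:ℝ), 0 < psih w)
    (hconst : ∀ w ≥ ξc, psih w = psih ξc)
    (hC1 : ∀ w ∈ Set.Ici (0:ℝ), HasDerivWithinAt psih (psih' w) (Set.Ici 0) w)
    (hC1c : ContinuousOn psih' (Set.Ici 0))
    (hC2 : ∀ w ∈ Set.Icc (0:ℝ) ξc, HasDerivWithinAt psih' (psih'' w) (Set.Icc 0 ξc) w)
    (hC2c : ContinuousOn psih'' (Set.Icc 0 ξc)) :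
    ∀ w : ℝ, MonotoneOn (fun ξ => cohesive psih psih' w ξ) (Set.Ici 0) := by
  -- derivative vanishes beyond ξc
  have h'zero : ∀ ξ, ξc ≤ ξ → psih' ξ = 0 := by
    intro ξ hξ
    have hξ0 : (0:ℝ) ≤ ξ := le_trans hξc.le hξ
    have h1 : HasDerivWithinAt psih (psih' ξ) (Ici ξ) ξ :=
      (hC1 ξ hξ0).mono (Ici_subset_Ici.2 hξ0)
    have h2 : HasDerivWithinAt (fun _ : ℝ => psih ξc) (psih' ξ) (Ici ξ) ξ := by
      apply h1.congr
      · intro t ht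
        exact (hconst t (le_trans hξ ht)).symm
      · exact (hconst ξ hξ).symm
    have h3 : HasDerivWithinAt (fun _ : ℝ => psih ξc) (0:ℝ) (Ici ξ) ξ :=
      hasDerivWithinAt_const ξ _ _
    have e1 := h2.derivWithin (uniqueDiffOn_Ici ξ ξ self_mem_Ici)
    have e2 := h3.derivWithin (uniqueDiffOn_Ici ξ ξ self_mem_Ici)
    rw [e2] at e1
    exact e1.symm
  -- antitonicity of psih'
  have hanti : AntitoneOn psih' (Ici 0) := by
    intro x hx y hy hxy
    rcases eq_or_lt_of_le hxy with rfl | hlt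
    · exact le_refl _
    · exact le_trans (hconc.le_slope_of_hasDerivWithinAt hx hy hlt (hC1 y hy))
        (hconc.slope_le_of_hasDerivWithinAt hx hy hlt (hC1 x hx))
  have h'nonneg : ∀ ξ, (0:ℝ) ≤ ξ → 0 ≤ psih' ξ := by
    intro ξ hξ
    rcases le_or_gt ξ ξc with h | h
    · have := hanti hξ (le_trans hξ h : ξc ∈ Ici (0:ℝ)) h
      rw [h'zero ξc le_rfl] at this
      exact this
    · rw [h'zero ξ h.le]
  -- second derivative nonpositive inside
  have h''nonpos : ∀ x ∈ Ioo (0:ℝ) ξc, psih'' x ≤ 0 := by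
    intro x hx
    have hd : HasDerivAt psih' (psih'' x) x :=
      (hC2 x ⟨hx.1.le, hx.2.le⟩).hasDerivAt (Icc_mem_nhds hx.1 hx.2)
    rw [hasDerivAt_iff_tendsto_slope] at hd
    have ht : Filter.Tendsto (slope psih' x) (nhdsWithin x (Ioi x)) (nhds (psih'' x)) :=
      hd.mono_left (nhdsWithin_mono x (fun y hy => ne_of_gt hy))
    refine le_of_tendsto ht ?_
    filter_upwards [Ioo_mem_nhdsGT_of_mem ⟨le_refl x, hx.2⟩] with y hy
    rw [slope_def_field]
    have h1 : psih' y ≤ psih' x :=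
      hanti hx.1.le (le_trans hx.1.le hy.1.le : y ∈ Ici (0:ℝ)) hy.1.le
    have h2 : (0:ℝ) ≤ y - x := by linarith [hy.1]
    exact div_nonpos_of_nonpos_of_nonneg (by linarith) h2
  have hψcont : ContinuousOn psih (Ici 0) := fun x hx => (hC1 x hx).continuousWithinAt
  intro w
  set a := |w| with ha_def
  have ha : (0:ℝ) ≤ a := abs_nonneg w
  have hw2 : w ^ 2 = a ^ 2 := (sq_abs w).symm
  set f : ℝ → ℝ := fun ξ => psih ξ - psih' ξ * ((ξ ^ 2 - w ^ 2) / (2 * ξ)) with hf_def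
  -- the constant piece beyond max a ξc
  have hfconst : ∀ ξ, ξc ≤ ξ → a ≤ ξ → f ξ = psih ξc := by
    intro ξ h1 _
    simp only [hf_def]
    rw [h'zero ξ h1, hconst ξ h1]
    ring
  have hfa : f a = psih a := by
    simp only [hf_def, hw2]
    simp
  -- monotone on Ici a
  have key : MonotoneOn f (Ici a) := by
    rcases le_or_gt ξc a with hca | hac
    · -- f constant on Ici a
      intro x hx y hy hxy
      rw [hfconst x (le_trans hca hx) hx, hfconst y (le_trans hca (le_trans hx hxy)) hy]
    · -- main case a < ξc
      have key1 : MonotoneOn f (Icc a ξc) := by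
        have hψc : ContinuousOn psih (Icc a ξc) :=
          hψcont.mono (fun t ht => le_trans ha ht.1)
        have hψ'c : ContinuousOn psih' (Icc a ξc) :=
          hC1c.mono (fun t ht => le_trans ha ht.1)
        have hdψ : ∀ x ∈ Ioo a ξc, HasDerivAt psih (psih' x) x := by
          intro x hx
          have hx0 : 0 < x := lt_of_le_of_lt ha hx.1
          exact (hC1 x hx0.le).hasDerivAt (Ici_mem_nhds hx0)
        have hdψ' : ∀ x ∈ Ioo a ξc, HasDerivAt psih' (psih'' x) x := by
          intro x hx
          have hx0 : 0 < x := lt_of_le_of_lt ha hx.1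
          exact (hC2 x ⟨hx0.le, hx.2.le⟩).hasDerivAt (Icc_mem_nhds hx0 hx.2)
        rcases eq_or_lt_of_le ha with ha0 | ha0
        · -- a = 0 : use congruent function ξ/2
          have hm2 : MonotoneOn (fun ξ => psih ξ - psih' ξ * (ξ / 2)) (Icc a ξc) := by
            apply aux_monotone psih psih' psih'' (fun ξ => ξ / 2) (fun _ => 1/2) a ξc
              hψc hψ'c ((continuous_id.div_const 2).continuousOn) hdψ hdψ'
            · intro x hx
              simpa using (hasDerivAt_id x).div_const 2
            · intro x hx
              have hx0 : 0 < x := lt_of_le_of_lt ha hx.1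
              have h1 : 0 ≤ psih' x := h'nonneg x hx0.le
              have h2 : psih'' x ≤ 0 := h''nonpos x ⟨hx0, hx.2⟩
              nlinarith
          have heq : ∀ ξ ∈ Icc a ξc, f ξ = psih ξ - psih' ξ * (ξ / 2) := by
            intro ξ hξ
            simp only [hf_def, hw2, ← ha0]
            rcases eq_or_lt_of_le hξ.1 with h | h
            · rw [← h, ← ha0]; norm_num
            · rw [← ha0] at h
              congr 1
              congr 1
              field_simp
              ring
          intro x hx y hy hxy
          rw [heq x hx, heq y hy]
          exact hm2 hx hy hxy
        · -- a > 0
          have hqc : ContinuousOn (fun ξ : ℝ => (ξ ^ 2 - w ^ 2) / (2 * ξ)) (Icc a ξc) := by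
            apply ContinuousOn.div
            · exact (continuous_pow 2).continuousOn.sub continuousOn_const
            · exact (continuous_const.mul continuous_id).continuousOn
            · intro x hx
              have : 0 < x := lt_of_lt_of_le ha0 hx.1
              positivity
          apply aux_monotone psih psih' psih''
            (fun ξ : ℝ => (ξ ^ 2 - w ^ 2) / (2 * ξ))
            (fun x : ℝ => (2 * x * (2 * x) - (x ^ 2 - w ^ 2) * 2) / (2 * x) ^ 2)
            a ξc hψc hψ'c hqc hdψ hdψ'
          · intro x hx
            have hx0 : 0 < x := lt_of_lt_of_le ha0 hx.1.le
            have hu : HasDerivAt (fun ξ : ℝ => ξ ^ 2 - w ^ 2) (2 * x) x := by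
              simpa using (hasDerivAt_pow 2 x).sub_const (w ^ 2)
            have hv : HasDerivAt (fun ξ : ℝ => 2 * ξ) 2 x := by
              simpa using (hasDerivAt_id x).const_mul (2:ℝ)
            exact hu.div hv (by positivity)
          · intro x hx
            have hx0 : 0 < x := lt_of_lt_of_le ha0 hx.1.le
            have hP : 0 ≤ psih' x := h'nonneg x hx0.le
            have hN : psih'' x ≤ 0 := h''nonpos x ⟨hx0, hx.2⟩
            have haxsq : w ^ 2 ≤ x ^ 2 := by
              rw [hw2]; nlinarith [hx.1, ha]
            have hq0 : 0 ≤ (x ^ 2 - w ^ 2) / (2 * x) :=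
              div_nonneg (by linarith) (by linarith)
            have hr0 : 0 ≤ (2 * x * (2 * x) - (x ^ 2 - w ^ 2) * 2) / (2 * x) ^ 2 :=
              div_nonneg (by nlinarith [sq_nonneg w]) (by positivity)
            have hr1 : (2 * x * (2 * x) - (x ^ 2 - w ^ 2) * 2) / (2 * x) ^ 2 ≤ 1 := by
              rw [div_le_one (by positivity)]
              nlinarith
            nlinarith [mul_nonpos_of_nonpos_of_nonneg hN hq0,
              mul_le_mul_of_nonneg_left hr1 hP]
      -- glue with the constant piece on [ξc, ∞)
      intro x hx y hy hxy
      rcases le_or_gt y ξc with hyc | hyc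
      · exact key1 ⟨hx, le_trans hxy hyc⟩ ⟨hy, hyc⟩ hxy
      · rcases le_or_gt ξc x with hxc | hxc
        · rw [hfconst x hxc hx, hfconst y hyc.le hy]
        · calc f x ≤ f ξc := key1 ⟨hx, hxc.le⟩ ⟨hac.le, le_rfl⟩ hxc.le
            _ = psih ξc := hfconst ξc le_rfl hac.le
            _ = f y := (hfconst y hyc.le hy).symm
  -- now reduce cohesive to f
  intro x hx y hy hxy
  simp only [cohesive]
  rcases le_or_gt y a with hya | hya
  · rw [if_pos (le_trans hxy hya), if_pos hya]
  · rw [if_neg (not_le.2 hya)]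
    rcases le_or_gt x a with hxa | hxa
    · rw [if_pos hxa]
      calc psih a = f a := hfa.symm
        _ ≤ f y := key (le_refl a) hya.le hya.le
    · rw [if_neg (not_le.2 hxa)]
      exact key hxa.le hya.le hxy
end

section
/- For every fixed ξ ≥ 0: (i) ψ(·,ξ) is even, i.e. ψ(−w,ξ) = ψ(w,ξ) for all w ∈ ℝ; (ii) ψ(·,ξ) is nondecreasing on [0,∞); (iii) the map w ↦ ψ(w,ξ) + (β/2)·w² is convex on ℝ (uniform λ-convexity of ψ(·,ξ) with λ independent of ξ). -/
/-- for every fixed ξ ≥ 0, ψ(·,ξ) is even, nondecreasing on [0,∞),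
and w ↦ ψ(w,ξ) + (β/2)·w² is convex on ℝ, where −β = min{ψ̂''(w) : w ∈ [0,ξ_c]}. -/
theorem cohesive_even_monotone_lambda_convex
    (ξc : ℝ) (hξc : 0 < ξc) (psih psih' psih'' : ℝ → ℝ)
    (hnn : ∀ w ≥ (0:ℝ), 0 ≤ psih w)
    (hconc : ConcaveOn ℝ (Set.Ici 0) psih)
    (h0 : psih 0 = 0)
    (hpos : ∀ w > (0:ℝ), 0 < psih w)
    (hconst : ∀ w ≥ ξc, psih w = psih ξc)
    (hC1 : ∀ w ∈ Set.Ici (0:ℝ), HasDerivWithinAt psih (psih' w) (Set.Ici 0) w)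
    (hC1c : ContinuousOn psih' (Set.Ici 0))
    (hC2 : ∀ w ∈ Set.Icc (0:ℝ) ξc, HasDerivWithinAt psih' (psih'' w) (Set.Icc 0 ξc) w)
    (hC2c : ContinuousOn psih'' (Set.Icc 0 ξc))
    (β : ℝ) (hβ : IsLeast (psih'' '' Set.Icc 0 ξc) (-β)) :
    ∀ ξ ≥ (0:ℝ),
      (∀ w : ℝ, cohesive psih psih' (-w) ξ = cohesive psih psih' w ξ) ∧
      MonotoneOn (fun w => cohesive psih psih' w ξ) (Set.Ici 0) ∧
      ConvexOn ℝ Set.univ (fun w : ℝ => cohesive psih psih' w ξ + β / 2 * w ^ 2) := by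
  -- A: psih x ≤ psih ξc for all x ≥ 0
  have hA : ∀ x ≥ (0:ℝ), psih x ≤ psih ξc := by
    intro x hx
    rcases le_or_gt ξc x with h | h
    · exact (hconst x h).le
    · have hz : 2 * ξc - x ≥ ξc := by linarith
      have hz0 : (2 * ξc - x) ∈ Set.Ici (0:ℝ) := by
        simp only [Set.mem_Ici]; linarith
      have hcc := hconc.2 (Set.mem_Ici.mpr hx) hz0
        (by norm_num : (0:ℝ) ≤ 1/2) (by norm_num : (0:ℝ) ≤ 1/2) (by norm_num)
      rw [hconst _ hz] at hcc
      have hmid : (1/2 : ℝ) • x + (1/2 : ℝ) • (2 * ξc - x) = ξc := by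
        simp only [smul_eq_mul]; ring
      rw [hmid] at hcc
      simp only [smul_eq_mul] at hcc
      linarith
  -- B: psih nondecreasing on [0, ∞)
  have hB : MonotoneOn psih (Set.Ici 0) := by
    intro x hx y hy hxy
    simp only [Set.mem_Ici] at hx hy
    rcases le_or_gt ξc y with h | h
    · rw [hconst y h]; exact hA x hx
    · rcases eq_or_lt_of_le hxy with rfl | hlt
      · exact le_rfl
      · have hcx : 0 < ξc - x := by linarith
        set a : ℝ := (ξc - y) / (ξc - x) with ha_def
        set b : ℝ := (y - x) / (ξc - x) with hb_def
        have ha : 0 ≤ a := div_nonneg (by linarith) hcx.le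
        have hb : 0 ≤ b := div_nonneg (by linarith) hcx.le
        have hab : a + b = 1 := by
          rw [ha_def, hb_def, ← add_div]
          field_simp
          ring
        have hcc := hconc.2 (Set.mem_Ici.mpr hx) (Set.mem_Ici.mpr hξc.le) ha hb hab
        have hmid : a • x + b • ξc = y := by
          rw [ha_def, hb_def]
          simp only [smul_eq_mul]
          field_simp
          ring
        rw [hmid] at hcc
        simp only [smul_eq_mul] at hcc
        have hbb := mul_le_mul_of_nonneg_left (hA x hx) hb
        have e : a * psih x + b * psih x = psih x := by rw [← add_mul, hab, one_mul]
        linarith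
  -- C: psih' t ≥ 0 for t ≥ 0
  have hsub : ∀ t : ℝ, 0 ≤ t → nhdsWithin t (Set.Ioi t) ≤ nhdsWithin t (Set.Ici 0 \ {t}) := by
    intro t ht
    exact nhdsWithin_mono t (fun y hy => ⟨le_trans ht (le_of_lt hy), ne_of_gt hy⟩)
  have hC : ∀ t ≥ (0:ℝ), 0 ≤ psih' t := by
    intro t ht
    have hd := (hasDerivWithinAt_iff_tendsto_slope.mp (hC1 t ht)).mono_left (hsub t ht)
    refine ge_of_tendsto hd ?_
    filter_upwards [self_mem_nhdsWithin] with y hy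
    rw [slope_def_field]
    exact div_nonneg (sub_nonneg.mpr (hB (Set.mem_Ici.mpr ht)
      (Set.mem_Ici.mpr (le_trans ht hy.le)) hy.le)) (by linarith [Set.mem_Ioi.mp hy])
  -- D: psih' t = 0 for t ≥ ξc
  have hD : ∀ t ≥ ξc, psih' t = 0 := by
    intro t ht
    have ht0 : (0:ℝ) ≤ t := le_trans hξc.le ht
    have hd := (hasDerivWithinAt_iff_tendsto_slope.mp (hC1 t ht0)).mono_left (hsub t ht0)
    have hz : Filter.Tendsto (slope psih t) (nhdsWithin t (Set.Ioi t)) (nhds 0) := by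
      refine Filter.Tendsto.congr' ?_ tendsto_const_nhds
      filter_upwards [self_mem_nhdsWithin] with y hy
      rw [slope_def_field, hconst y (le_trans ht hy.le), hconst t ht, sub_self, zero_div]
    exact (tendsto_nhds_unique hd hz)
  -- E: β ≥ 0
  have hE : 0 ≤ β := by
    by_contra hcon
    push_neg at hcon
    have hpos'' : ∀ x ∈ Set.Icc (0:ℝ) ξc, 0 < psih'' x := by
      intro x hx
      have := hβ.2 ⟨x, hx, rfl⟩
      linarith
    have hsm : StrictMonoOn psih' (Set.Icc 0 ξc) := by
      refine strictMonoOn_of_deriv_pos (convex_Icc 0 ξc)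
        (hC1c.mono (Set.Icc_subset_Ici_self)) ?_
      intro x hx
      rw [interior_Icc] at hx
      have hx' : x ∈ Set.Icc (0:ℝ) ξc := Set.Ioo_subset_Icc_self hx
      have hda : HasDerivAt psih' (psih'' x) x :=
        (hC2 x hx').hasDerivAt (Icc_mem_nhds hx.1 hx.2)
      rw [hda.deriv]
      exact hpos'' x hx'
    have h1 : psih' 0 < psih' ξc :=
      hsm (Set.left_mem_Icc.mpr hξc.le) (Set.right_mem_Icc.mpr hξc.le) hξc
    rw [hD ξc le_rfl] at h1
    linarith [hC 0 le_rfl]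
  -- G: w ↦ psih' w + β * w is monotone on [0, ∞)
  have hF : MonotoneOn (fun w => psih' w + β * w) (Set.Icc 0 ξc) := by
    refine monotoneOn_of_deriv_nonneg (convex_Icc 0 ξc)
      (((hC1c.mono Set.Icc_subset_Ici_self).add (continuous_const.mul continuous_id).continuousOn)) ?_ ?_
    · intro x hx
      rw [interior_Icc] at hx
      have hda : HasDerivAt (fun w => psih' w + β * w) (psih'' x + β) x := by
        have h1 : HasDerivAt psih' (psih'' x) x :=
          (hC2 x (Set.Ioo_subset_Icc_self hx)).hasDerivAt (Icc_mem_nhds hx.1 hx.2)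
        simpa [Pi.add_def] using h1.add ((hasDerivAt_id x).const_mul β)
      exact hda.differentiableAt.differentiableWithinAt
    · intro x hx
      rw [interior_Icc] at hx
      have hda : HasDerivAt (fun w => psih' w + β * w) (psih'' x + β) x := by
        have h1 : HasDerivAt psih' (psih'' x) x :=
          (hC2 x (Set.Ioo_subset_Icc_self hx)).hasDerivAt (Icc_mem_nhds hx.1 hx.2)
        simpa [Pi.add_def] using h1.add ((hasDerivAt_id x).const_mul β)
      rw [hda.deriv]
      have := hβ.2 ⟨x, Set.Ioo_subset_Icc_self hx, rfl⟩
      linarith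
  have hG : MonotoneOn (fun w => psih' w + β * w) (Set.Ici 0) := by
    intro x hx y hy hxy
    simp only [Set.mem_Ici] at hx hy
    rcases le_or_gt y ξc with h | h
    · exact hF ⟨hx, le_trans hxy h⟩ ⟨hy, h⟩ hxy
    · rcases le_or_gt x ξc with h2 | h2
      · have s1 := hF ⟨hx, h2⟩ ⟨hξc.le, le_rfl⟩ h2
        simp only [hD ξc le_rfl, hD y h.le, zero_add] at s1 ⊢
        have : β * ξc ≤ β * y := mul_le_mul_of_nonneg_left (by linarith) hE
        linarith
      · simp only [hD x h2.le, hD y h.le]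
        have : β * x ≤ β * y := mul_le_mul_of_nonneg_left hxy hE
        linarith
  -- main part
  intro ξ hξ
  -- evenness
  have heven : ∀ w : ℝ, cohesive psih psih' (-w) ξ = cohesive psih psih' w ξ := by
    intro w
    simp only [cohesive, abs_neg, neg_sq]
  -- monotonicity of cohesive on [0,∞)
  have hmonoC : MonotoneOn (fun w => cohesive psih psih' w ξ) (Set.Ici 0) := by
    intro x hx y hy hxy
    simp only [Set.mem_Ici] at hx hy
    simp only [cohesive, abs_of_nonneg hx, abs_of_nonneg hy]
    split_ifs with h1 h2 h2
    · exact hB (Set.mem_Ici.mpr hx) (Set.mem_Ici.mpr hy) hxy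
    · exact absurd (le_trans h1 hxy) h2
    · -- x < ξ ≤ y
      push_neg at h1
      have hξpos : 0 < ξ := lt_of_le_of_lt hx h1
      have ht : 0 ≤ psih' ξ * ((ξ ^ 2 - x ^ 2) / (2 * ξ)) := by
        apply mul_nonneg (hC ξ hξ)
        apply div_nonneg _ (by linarith)
        nlinarith
      have := hB (Set.mem_Ici.mpr hξ) (Set.mem_Ici.mpr hy) h2
      linarith
    · -- both quadratic
      push_neg at h1 h2
      have hξpos : 0 < ξ := lt_of_le_of_lt hx h1
      have h2ξ : (0:ℝ) < 2 * ξ := by linarith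
      have hdd : (ξ ^ 2 - y ^ 2) / (2 * ξ) ≤ (ξ ^ 2 - x ^ 2) / (2 * ξ) :=
        (div_le_div_iff_of_pos_right h2ξ).mpr (by nlinarith)
      have hm := mul_le_mul_of_nonneg_left hdd (hC ξ hξ)
      linarith
  refine ⟨heven, hmonoC, ?_⟩
  set F : ℝ → ℝ := fun w : ℝ => cohesive psih psih' w ξ + β / 2 * w ^ 2 with hFdef
  set F' : ℝ → ℝ := fun w : ℝ => (if ξ ≤ w then psih' w else psih' ξ * w / ξ) + β * w with hF'def
  -- derivative of the quadratic branch
  have hQder : 0 < ξ → ∀ w : ℝ, HasDerivAt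
      (fun w' : ℝ => psih ξ - psih' ξ * ((ξ ^ 2 - w' ^ 2) / (2 * ξ)) + β / 2 * w' ^ 2)
      (psih' ξ * w / ξ + β * w) w := by
    intro hξp w
    have h1 : HasDerivAt (fun w' : ℝ => w' ^ 2) (2 * w) w := by
      simpa using hasDerivAt_pow 2 w
    have h2 := ((h1.const_sub (ξ ^ 2)).div_const (2 * ξ)).const_mul (psih' ξ)
    have h3 := (h2.const_sub (psih ξ)).add (h1.const_mul (β / 2))
    have heq : psih' ξ * w / ξ + β * w
        = -(psih' ξ * (-(2 * w) / (2 * ξ))) + β / 2 * (2 * w) := by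
      field_simp
    rw [heq]
    exact h3
  have hquad : ∀ w : ℝ, HasDerivAt (fun w' : ℝ => β / 2 * w' ^ 2) (β * w) w := by
    intro w
    have := (hasDerivAt_pow 2 w).const_mul (β / 2)
    refine this.congr_deriv ?_
    push_cast
    ring
  have hderivAt : ∀ w ∈ Set.Ioi (0:ℝ), HasDerivAt F (F' w) w := by
    intro w hw
    simp only [Set.mem_Ioi] at hw
    rcases lt_trichotomy w ξ with hwξ | heq | hξw
    · -- w < ξ, quadratic branch; ξ > 0
      have hξp : 0 < ξ := lt_trans hw hwξ
      have hF'w : F' w = psih' ξ * w / ξ + β * w := by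
        simp only [hF'def, if_neg (not_le.mpr hwξ)]
      rw [hF'w]
      refine (hQder hξp w).congr_of_eventuallyEq ?_
      filter_upwards [Ioo_mem_nhds (by linarith : -ξ < w) hwξ] with y hy
      have hny : ¬ ξ ≤ |y| := not_le.mpr (abs_lt.mpr ⟨hy.1, hy.2⟩)
      simp only [hFdef, cohesive, if_neg hny]
    · -- w = ξ > 0
      subst heq
      have hξp : 0 < w := hw
      have hwnn : (0:ℝ) ≤ w := hw.le
      have hF'w : F' w = psih' w + β * w := by
        simp only [hF'def, if_pos le_rfl]
      rw [hF'w]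
      have hright : HasDerivWithinAt F (psih' w + β * w) (Set.Ici w) w := by
        have hψ : HasDerivWithinAt psih (psih' w) (Set.Ici w) w :=
          (hC1 w hwnn).mono (Set.Ici_subset_Ici.mpr hwnn)
        have hsum := hψ.add (hquad w).hasDerivWithinAt
        refine hsum.congr ?_ ?_
        · intro y hy
          have hy0 : (0:ℝ) ≤ y := le_trans hwnn hy
          simp only [hFdef, cohesive, abs_of_nonneg hy0, if_pos (Set.mem_Ici.mp hy), Pi.add_apply]
        · simp only [hFdef, cohesive, abs_of_nonneg hwnn, if_pos le_rfl, Pi.add_apply]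
      have hleft : HasDerivWithinAt F (psih' w + β * w) (Set.Iic w) w := by
        have hQ := hQder hξp w
        rw [mul_div_assoc, div_self hξp.ne', mul_one] at hQ
        refine hQ.hasDerivWithinAt.congr_of_eventuallyEq ?_ ?_
        · filter_upwards [mem_nhdsWithin_of_mem_nhds (Ioi_mem_nhds (by linarith : -w < w)),
            self_mem_nhdsWithin] with y hy1 hy2
          rcases eq_or_lt_of_le (Set.mem_Iic.mp hy2) with rfl | hlt
          · simp only [hFdef, cohesive, abs_of_nonneg hwnn, if_pos le_rfl, sub_self,
              zero_div, mul_zero, sub_zero]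
          · have hny : ¬ w ≤ |y| := not_le.mpr (abs_lt.mpr ⟨Set.mem_Ioi.mp hy1, hlt⟩)
            simp only [hFdef, cohesive, if_neg hny]
        · simp only [hFdef, cohesive, abs_of_nonneg hwnn, if_pos le_rfl, sub_self,
            zero_div, mul_zero, sub_zero]
      have hu := hleft.union hright
      rw [Set.Iic_union_Ici] at hu
      exact hasDerivWithinAt_univ.mp hu
    · -- ξ < w
      have hF'w : F' w = psih' w + β * w := by
        simp only [hF'def, if_pos hξw.le]
      rw [hF'w]
      have hψ : HasDerivAt psih (psih' w) w :=
        (hC1 w hw.le).hasDerivAt (Ici_mem_nhds hw)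
      refine (hψ.add (hquad w)).congr_of_eventuallyEq ?_
      filter_upwards [Ioi_mem_nhds (max_lt hξw hw : max ξ 0 < w)] with y hy
      have hy0 : (0:ℝ) ≤ y := (le_max_right ξ 0).trans (Set.mem_Ioi.mp hy).le
      have hyξ : ξ ≤ y := (le_max_left ξ 0).trans (Set.mem_Ioi.mp hy).le
      simp only [hFdef, cohesive, abs_of_nonneg hy0, if_pos hyξ, Pi.add_apply]
  -- continuity of F on [0, ∞)
  have hcont : ContinuousOn F (Set.Ici 0) := by
    intro w hw
    rcases eq_or_lt_of_le (Set.mem_Ici.mp hw) with rfl | hwpos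
    · -- w = 0
      rcases eq_or_lt_of_le hξ with rfl | hξp
      · -- ξ = 0
        have hψc : ContinuousOn psih (Set.Ici 0) :=
          fun x hx => (hC1 x hx).continuousWithinAt
        have hcψ : ContinuousOn (fun w' : ℝ => psih w' + β / 2 * w' ^ 2) (Set.Ici 0) :=
          hψc.add (Continuous.continuousOn (continuous_const.mul (continuous_pow 2)))
        refine (hcψ.congr ?_) _ hw
        intro y hy
        simp only [hFdef, cohesive, abs_of_nonneg (Set.mem_Ici.mp hy),
          if_pos (Set.mem_Ici.mp hy)]
      · -- ξ > 0
        have hQc : ContinuousAt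
            (fun w' : ℝ => psih ξ - psih' ξ * ((ξ ^ 2 - w' ^ 2) / (2 * ξ)) + β / 2 * w' ^ 2) 0 :=
          Continuous.continuousAt
            ((continuous_const.sub (continuous_const.mul
              ((continuous_const.sub (continuous_pow 2)).div_const (2 * ξ)))).add
              (continuous_const.mul (continuous_pow 2)))
        refine (hQc.congr ?_).continuousWithinAt
        filter_upwards [Ioo_mem_nhds (by linarith : -ξ < (0:ℝ)) hξp] with y hy
        have hny : ¬ ξ ≤ |y| := not_le.mpr (abs_lt.mpr ⟨hy.1, hy.2⟩)
        simp only [hFdef, cohesive, if_neg hny]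
    · exact (hderivAt w hwpos).continuousAt.continuousWithinAt
  -- convexity of F on [0, ∞)
  have hconvIci : ConvexOn ℝ (Set.Ici 0) F := by
    refine MonotoneOn.convexOn_of_deriv (convex_Ici 0) hcont ?_ ?_
    · rw [interior_Ici]
      exact fun w hw => (hderivAt w hw).differentiableAt.differentiableWithinAt
    · rw [interior_Ici]
      intro x hx y hy hxy
      rw [(hderivAt x hx).deriv, (hderivAt y hy).deriv]
      simp only [hF'def]
      split_ifs with h1 h2 h2
      · simpa using hG (Set.mem_Ici.mpr (le_of_lt hx)) (Set.mem_Ici.mpr (le_of_lt hy)) hxy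
      · exact absurd (le_trans h1 hxy) h2
      · -- ¬ ξ ≤ x, ξ ≤ y
        push_neg at h1
        have hξp : 0 < ξ := lt_trans hx h1
        have s1 : psih' ξ * x / ξ ≤ psih' ξ := by
          rw [div_le_iff₀ hξp]
          exact mul_le_mul_of_nonneg_left h1.le (hC ξ hξ)
        have s2 : β * x ≤ β * ξ := mul_le_mul_of_nonneg_left h1.le hE
        have s3 := hG (Set.mem_Ici.mpr hξ) (Set.mem_Ici.mpr (le_trans hξ h2)) h2
        simp only [] at s3
        linarith [s3]
      · push_neg at h1 h2
        have hξp : 0 < ξ := lt_trans hx h1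
        have s1 : psih' ξ * x / ξ ≤ psih' ξ * y / ξ :=
          (div_le_div_iff_of_pos_right hξp).mpr (mul_le_mul_of_nonneg_left hxy (hC ξ hξ))
        have s2 : β * x ≤ β * y := mul_le_mul_of_nonneg_left hxy hE
        linarith
  -- monotonicity of F on [0, ∞)
  have hmonoF : MonotoneOn F (Set.Ici 0) := by
    intro x hx y hy hxy
    have h2 : β / 2 * x ^ 2 ≤ β / 2 * y ^ 2 := by
      have hx0 : (0:ℝ) ≤ x := hx
      have hx2 : x ^ 2 ≤ y ^ 2 := by nlinarith [mul_le_mul hxy hxy hx0 (hx0.trans hxy)]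
      have hβ2 : (0:ℝ) ≤ β / 2 := by linarith
      exact mul_le_mul_of_nonneg_left hx2 hβ2
    exact add_le_add (hmonoC hx hy hxy) h2
  -- evenness of F
  have habs : ∀ z : ℝ, F z = F |z| := by
    intro z
    simp only [hFdef, sq_abs]
    rcases le_or_gt 0 z with h | h
    · rw [abs_of_nonneg h]
    · rw [abs_of_neg h, heven z]
  -- conclude convexity on ℝ
  refine ⟨convex_univ, ?_⟩
  intro x _ y _ a b ha hb hab
  simp only [smul_eq_mul]
  have key : |a * x + b * y| ≤ a * |x| + b * |y| := by
    calc |a * x + b * y| ≤ |a * x| + |b * y| := abs_add_le _ _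
      _ = a * |x| + b * |y| := by
          rw [abs_mul, abs_mul, abs_of_nonneg ha, abs_of_nonneg hb]
  calc F (a * x + b * y) = F |a * x + b * y| := habs _
    _ ≤ F (a * |x| + b * |y|) := by
        refine hmonoF (Set.mem_Ici.mpr (abs_nonneg _)) (Set.mem_Ici.mpr (by positivity)) key
    _ ≤ a * F |x| + b * F |y| := by
        simpa using hconvIci.2 (Set.mem_Ici.mpr (abs_nonneg x)) (Set.mem_Ici.mpr (abs_nonneg y)) ha hb hab
    _ = a * F x + b * F y := by rw [← habs, ← habs]
end

section
/- For every ξ ≥ 0 the map ψ(·,ξ) is Lipschitz with constant ψ̂'(0): for all w₁, w₂ ∈ ℝ, |ψ(w₁,ξ) − ψ(w₂,ξ)| ≤ ψ̂'(0)·|w₁ − w₂|. -/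
/-- for every ξ ≥ 0, ψ(·,ξ) is Lipschitz with constant ψ̂'(0). -/
theorem cohesive_lipschitz_w
    (ξc : ℝ) (hξc : 0 < ξc) (psih psih' psih'' : ℝ → ℝ)
    (hnn : ∀ w ≥ (0:ℝ), 0 ≤ psih w)
    (hconc : ConcaveOn ℝ (Set.Ici 0) psih)
    (h0 : psih 0 = 0)
    (hpos : ∀ w > (0:ℝ), 0 < psih w)
    (hconst : ∀ w ≥ ξc, psih w = psih ξc)
    (hC1 : ∀ w ∈ Set.Ici (0:ℝ), HasDerivWithinAt psih (psih' w) (Set.Ici 0) w)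
    (hC1c : ContinuousOn psih' (Set.Ici 0))
    (hC2 : ∀ w ∈ Set.Icc (0:ℝ) ξc, HasDerivWithinAt psih' (psih'' w) (Set.Icc 0 ξc) w)
    (hC2c : ContinuousOn psih'' (Set.Icc 0 ξc)) :
    ∀ ξ ≥ (0:ℝ), ∀ w₁ w₂ : ℝ,
      |cohesive psih psih' w₁ ξ - cohesive psih psih' w₂ ξ| ≤ psih' 0 * |w₁ - w₂| := by
  -- psih' is nonnegative on [0,∞)
  have hnonneg : ∀ x ≥ (0:ℝ), 0 ≤ psih' x := by
    intro x hx
    set c : ℝ := max x ξc + 1 with hc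
    have hxc : x < c := lt_of_le_of_lt (le_max_left _ _) (by linarith [le_max_left x ξc])
    have hcξc : ξc ≤ c := by
      have := le_max_right x ξc; linarith
    have hc0 : (0:ℝ) ≤ c := le_trans hx hxc.le
    have hslope1 : (psih (c+1) - psih c) / ((c+1) - c) ≤ (psih c - psih x) / (c - x) :=
      hconc.slope_anti_adjacent (Set.mem_Ici.2 hx) (Set.mem_Ici.2 (by linarith : (0:ℝ) ≤ c+1))
        hxc (by linarith)
    have hslope0 : (psih (c+1) - psih c) / ((c+1) - c) = 0 := by
      rw [hconst c hcξc, hconst (c+1) (by linarith)]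
      simp
    have hs2 : slope psih x c ≤ psih' x :=
      hconc.slope_le_of_hasDerivWithinAt (Set.mem_Ici.2 hx) (Set.mem_Ici.2 hc0) hxc
        (hC1 x hx)
    rw [slope_def_field] at hs2
    rw [hslope0] at hslope1
    linarith
  -- psih' is bounded above by psih' 0 on [0,∞)
  have hub : ∀ x ≥ (0:ℝ), psih' x ≤ psih' 0 := by
    intro x hx
    rcases eq_or_lt_of_le hx with h | hx'
    · exact le_of_eq (by rw [← h])
    have h1 : psih' x ≤ slope psih 0 x :=
      hconc.le_slope_of_hasDerivWithinAt (Set.mem_Ici.2 le_rfl) (Set.mem_Ici.2 hx.le) hx'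
        (hC1 x hx)
    have h2 : slope psih 0 x ≤ psih' 0 :=
      hconc.slope_le_of_hasDerivWithinAt (Set.mem_Ici.2 le_rfl) (Set.mem_Ici.2 hx.le) hx'
        (hC1 0 (Set.mem_Ici.2 le_rfl))
    rw [slope_def_field] at h1 h2
    linarith
  intro ξ hξ w₁ w₂
  -- the profile function and its derivative
  set F : ℝ → ℝ := fun x => if ξ ≤ x then psih x else psih ξ - psih' ξ * ((ξ^2 - x^2)/(2*ξ))
    with hF
  set G : ℝ → ℝ := fun x => if ξ ≤ x then psih' x else psih' ξ * x / ξ with hG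
  have hcoh : ∀ w : ℝ, cohesive psih psih' w ξ = F |w| := by
    intro w
    simp only [cohesive, hF, abs_abs, sq_abs]
  -- F has derivative G within Ici 0
  have hderiv : ∀ x ∈ Set.Ici (0:ℝ), HasDerivWithinAt F (G x) (Set.Ici 0) x := by
    intro x hx
    rcases eq_or_lt_of_le hξ with hξ0 | hξpos
    · -- ξ = 0 : F = psih on Ici 0
      have hGx : G x = psih' x := if_pos (hξ0 ▸ hx)
      rw [hGx]
      refine (hC1 x hx).congr (fun y hy => ?_) ?_
      · simp only [hF]; rw [if_pos (hξ0 ▸ hy)]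
      · simp only [hF]; rw [if_pos (hξ0 ▸ hx)]
    rcases lt_trichotomy x ξ with hlt | heq | hgt
    · -- quadratic region
      have hGx : G x = psih' ξ * x / ξ := if_neg (not_le.2 hlt)
      have hq : HasDerivAt (fun y : ℝ => psih ξ - psih' ξ * ((ξ^2 - y^2)/(2*ξ)))
          (psih' ξ * x / ξ) x := by
        have h1 : HasDerivAt (fun y : ℝ => y^2) (2*x) x := by
          simpa using hasDerivAt_pow 2 x
        have h2 := ((hasDerivAt_const x (ξ^2)).sub h1).div_const (2*ξ)
        have h3 := (h2.const_mul (psih' ξ)).const_sub (psih ξ)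
        refine h3.congr_deriv ?_
        field_simp
        ring
      rw [hGx]
      refine (hq.hasDerivWithinAt).congr_of_eventuallyEq ?_ ?_
      · filter_upwards [mem_nhdsWithin_of_mem_nhds (Iio_mem_nhds hlt)] with y hy
        simp only [hF]; rw [if_neg (not_le.2 hy)]
      · simp only [hF]; rw [if_neg (not_le.2 hlt)]
    · -- x = ξ
      subst heq
      have hGx : G x = psih' x := if_pos le_rfl
      rw [hGx]
      have hleft : HasDerivWithinAt F (psih' x) (Set.Iic x) x := by
        have hq : HasDerivAt (fun y : ℝ => psih x - psih' x * ((x^2 - y^2)/(2*x)))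
            (psih' x) x := by
          have h1 : HasDerivAt (fun y : ℝ => y^2) (2*x) x := by
            simpa using hasDerivAt_pow 2 x
          have h2 := ((hasDerivAt_const x (x^2)).sub h1).div_const (2*x)
          have h3 := (h2.const_mul (psih' x)).const_sub (psih x)
          refine h3.congr_deriv ?_
          field_simp
          try ring
        refine (hq.hasDerivWithinAt).congr (fun y hy => ?_) ?_
        · simp only [hF]
          rcases eq_or_lt_of_le (Set.mem_Iic.1 hy) with rfl | hy'
          · rw [if_pos le_rfl]; simp
          · rw [if_neg (not_le.2 hy')]
        · simp only [hF]; rw [if_pos le_rfl]; simp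
      have hright : HasDerivWithinAt F (psih' x) (Set.Ici x) x := by
        refine ((hC1 x hx).mono (Set.Ici_subset_Ici.2 hx)).congr (fun y hy => ?_) ?_
        · simp only [hF]; rw [if_pos (Set.mem_Ici.1 hy)]
        · simp only [hF]; rw [if_pos le_rfl]
      have := hleft.union hright
      rw [Set.Iic_union_Ici] at this
      exact this.mono (Set.subset_univ _)
    · -- psih region
      have hGx : G x = psih' x := if_pos hgt.le
      rw [hGx]
      refine (hC1 x hx).congr_of_eventuallyEq ?_ ?_
      · filter_upwards [mem_nhdsWithin_of_mem_nhds (Ioi_mem_nhds hgt)] with y hy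
        simp only [hF]; rw [if_pos (le_of_lt hy)]
      · simp only [hF]; rw [if_pos hgt.le]
  -- bound on G
  have hbound : ∀ x ∈ Set.Ici (0:ℝ), ‖G x‖ ≤ psih' 0 := by
    intro x hx
    rw [Real.norm_eq_abs]
    simp only [hG]
    split_ifs with h
    · rw [abs_of_nonneg (hnonneg x hx)]
      exact hub x hx
    · have hξpos : 0 < ξ := lt_of_le_of_lt hx (not_le.1 h)
      have hxξ : x < ξ := lt_of_not_ge h
      have h1 : 0 ≤ psih' ξ := hnonneg ξ hξ
      rw [abs_of_nonneg (div_nonneg (mul_nonneg h1 (Set.mem_Ici.1 hx)) hξpos.le)]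
      have : psih' ξ * x / ξ ≤ psih' ξ := by
        rw [div_le_iff₀ hξpos]
        nlinarith
      exact this.trans (hub ξ hξ)
  -- apply the mean value inequality
  have key := Convex.norm_image_sub_le_of_norm_hasDerivWithin_le hderiv hbound
    (convex_Ici 0) (Set.mem_Ici.2 (abs_nonneg w₂)) (Set.mem_Ici.2 (abs_nonneg w₁))
  rw [hcoh w₁, hcoh w₂]
  rw [Real.norm_eq_abs, Real.norm_eq_abs] at key
  refine key.trans ?_
  have h0' : 0 ≤ psih' 0 := hnonneg 0 le_rfl
  exact mul_le_mul_of_nonneg_left (abs_abs_sub_abs_le_abs_sub _ _) h0'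
end

section
/- At every point (w,ξ) with 0 < ξ < ξ_c and |w| ≤ ξ, the density ψ is (jointly, Fréchet) differentiable, with partial derivatives ∂_wψ(w,ξ) = (ψ̂'(ξ)/ξ)·w and ∂_ξψ(w,ξ) = −(1/2)·(ψ̂''(ξ)·ξ − ψ̂'(ξ))·(ξ² − w²)/ξ². Moreover ∂_ξψ(w,ξ) ≥ 0 at all such points. -/
open Set Filter Asymptotics

/-- Gluing lemma: if `f` agrees pointwise with one of two functions `g`, `h` which both
have the same Fréchet derivative at `x` and the same value at `x` as `f`, then `f` has
that derivative at `x`. -/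
lemma glue_hasFDerivAt {E F : Type*} [NormedAddCommGroup E] [NormedSpace ℝ E]
    [NormedAddCommGroup F] [NormedSpace ℝ F]
    {f g h : E → F} {L : E →L[ℝ] F} {x : E}
    (hor : ∀ p, f p = g p ∨ f p = h p) (hfg : f x = g x) (hgh : g x = h x)
    (hg : HasFDerivAt g L x) (hh : HasFDerivAt h L x) : HasFDerivAt f L x := by
  rw [hasFDerivAt_iff_isLittleO_nhds_zero] at hg hh ⊢
  have hO : (fun v => f (x + v) - f x - L v) =O[nhds 0]
      (fun v => ‖g (x + v) - g x - L v‖ + ‖h (x + v) - h x - L v‖) := by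
    apply IsBigO.of_bound 1
    filter_upwards with v
    have hg0 : (0:ℝ) ≤ ‖g (x + v) - g x - L v‖ := norm_nonneg _
    have hh0 : (0:ℝ) ≤ ‖h (x + v) - h x - L v‖ := norm_nonneg _
    rw [one_mul, Real.norm_eq_abs, abs_of_nonneg (by positivity)]
    rcases hor (x + v) with hv | hv
    · have he : f (x + v) - f x - L v = g (x + v) - g x - L v := by rw [hv, hfg]
      rw [he]; exact le_add_of_nonneg_right hh0
    · have he : f (x + v) - f x - L v = h (x + v) - h x - L v := by rw [hv, hfg, hgh]
      rw [he]; exact le_add_of_nonneg_left hg0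
  exact hO.trans_isLittleO (hg.norm_left.add hh.norm_left)

/-- at every (w,ξ) with 0 < ξ < ξ_c and |w| ≤ ξ, ψ is jointly (Fréchet)
differentiable with ∂_wψ(w,ξ) = (ψ̂'(ξ)/ξ)·w and
∂_ξψ(w,ξ) = −(1/2)·(ψ̂''(ξ)·ξ − ψ̂'(ξ))·(ξ² − w²)/ξ², and ∂_ξψ(w,ξ) ≥ 0. -/
theorem cohesive_frechet_diff_interior
    (ξc : ℝ) (hξc : 0 < ξc) (psih psih' psih'' : ℝ → ℝ)
    (hnn : ∀ w ≥ (0:ℝ), 0 ≤ psih w)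
    (hconc : ConcaveOn ℝ (Set.Ici 0) psih)
    (h0 : psih 0 = 0)
    (hpos : ∀ w > (0:ℝ), 0 < psih w)
    (hconst : ∀ w ≥ ξc, psih w = psih ξc)
    (hC1 : ∀ w ∈ Set.Ici (0:ℝ), HasDerivWithinAt psih (psih' w) (Set.Ici 0) w)
    (hC1c : ContinuousOn psih' (Set.Ici 0))
    (hC2 : ∀ w ∈ Set.Icc (0:ℝ) ξc, HasDerivWithinAt psih' (psih'' w) (Set.Icc 0 ξc) w)
    (hC2c : ContinuousOn psih'' (Set.Icc 0 ξc)) :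
    ∀ w ξ : ℝ, 0 < ξ → ξ < ξc → |w| ≤ ξ →
      HasFDerivAt (fun p : ℝ × ℝ => cohesive psih psih' p.1 p.2)
        ((ContinuousLinearMap.fst ℝ ℝ ℝ).smulRight (psih' ξ / ξ * w) +
          (ContinuousLinearMap.snd ℝ ℝ ℝ).smulRight
            (-(1 / 2) * (psih'' ξ * ξ - psih' ξ) * ((ξ ^ 2 - w ^ 2) / ξ ^ 2)))
        (w, ξ) ∧
      0 ≤ -(1 / 2) * (psih'' ξ * ξ - psih' ξ) * ((ξ ^ 2 - w ^ 2) / ξ ^ 2) := by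
  -- psih' is antitone on [0, ∞)
  have hanti : ∀ ⦃x y : ℝ⦄, 0 ≤ x → x < y → psih' y ≤ psih' x := by
    intro x y hx hxy
    have hy : (0:ℝ) ≤ y := le_trans hx hxy.le
    exact (hconc.le_slope_of_hasDerivWithinAt hx hy hxy (hC1 y hy)).trans
      (hconc.slope_le_of_hasDerivWithinAt hx hy hxy (hC1 x hx))
  -- psih' vanishes beyond ξc
  have hzero : psih' (ξc + 1) = 0 := by
    have hmem : (ξc + 1 : ℝ) ∈ Set.Ici (0:ℝ) := by
      simp only [Set.mem_Ici]; linarith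
    have hd1 : HasDerivAt psih (psih' (ξc + 1)) (ξc + 1) :=
      (hC1 _ hmem).hasDerivAt (Ici_mem_nhds (by linarith))
    have heq : psih =ᶠ[nhds (ξc + 1)] fun _ => psih ξc := by
      filter_upwards [Ioi_mem_nhds (show ξc < ξc + 1 by linarith)] with t ht
      exact hconst t (le_of_lt ht)
    have hd2 : HasDerivAt psih 0 (ξc + 1) :=
      (hasDerivAt_const (ξc + 1) (psih ξc)).congr_of_eventuallyEq heq
    exact hd1.unique hd2
  intro w ξ hξ hξξc hwξ
  have hξ0 : ξ ≠ 0 := ne_of_gt hξ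
  have hψ : HasDerivAt psih (psih' ξ) ξ :=
    (hC1 ξ (le_of_lt hξ)).hasDerivAt (Ici_mem_nhds hξ)
  have hψ' : HasDerivAt psih' (psih'' ξ) ξ :=
    (hC2 ξ ⟨hξ.le, hξξc.le⟩).hasDerivAt (Icc_mem_nhds hξ hξξc)
  -- psih' ξ ≥ 0
  have hp'nn : 0 ≤ psih' ξ := by
    rw [← hzero]; exact hanti hξ.le (by linarith)
  -- psih'' ξ ≤ 0
  have hp''np : psih'' ξ ≤ 0 := by
    have ht : Filter.Tendsto (slope psih' ξ) (nhdsWithin ξ {ξ}ᶜ) (nhds (psih'' ξ)) :=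
      hasDerivAt_iff_tendsto_slope.mp hψ'
    refine le_of_tendsto ht ?_
    filter_upwards [self_mem_nhdsWithin,
      mem_nhdsWithin_of_mem_nhds (Ioo_mem_nhds hξ hξξc)] with y hy1 hy2
    have hyne : y ≠ ξ := hy1
    rw [slope_def_field]
    rcases lt_or_gt_of_ne hyne with hlt | hgt
    · apply div_nonpos_of_nonneg_of_nonpos
      · have : psih' ξ ≤ psih' y := hanti hy2.1.le hlt
        linarith
      · linarith
    · apply div_nonpos_of_nonpos_of_nonneg
      · have : psih' y ≤ psih' ξ := hanti hξ.le hgt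
        linarith
      · linarith
  -- the nonnegativity claim
  have hw2 : w ^ 2 ≤ ξ ^ 2 := by
    have := pow_le_pow_left₀ (abs_nonneg w) hwξ 2
    rwa [sq_abs] at this
  have hnonneg : 0 ≤ -(1 / 2) * (psih'' ξ * ξ - psih' ξ) * ((ξ ^ 2 - w ^ 2) / ξ ^ 2) := by
    apply mul_nonneg
    · nlinarith
    · apply div_nonneg (by linarith) (sq_nonneg ξ)
  refine ⟨?_, hnonneg⟩
  set L : ℝ × ℝ →L[ℝ] ℝ :=
    (ContinuousLinearMap.fst ℝ ℝ ℝ).smulRight (psih' ξ / ξ * w) +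
      (ContinuousLinearMap.snd ℝ ℝ ℝ).smulRight
        (-(1 / 2) * (psih'' ξ * ξ - psih' ξ) * ((ξ ^ 2 - w ^ 2) / ξ ^ 2)) with hL
  -- the smooth (quadratic) branch, written without singular division in w
  set q : ℝ × ℝ → ℝ :=
    fun p => (psih p.2 - psih' p.2 * p.2 / 2) + psih' p.2 / (2 * p.2) * p.1 ^ 2 with hqdef
  -- q agrees with the else-branch whenever p.2 ≠ 0
  have hqeq : ∀ p : ℝ × ℝ, p.2 ≠ 0 →
      psih p.2 - psih' p.2 * ((p.2 ^ 2 - p.1 ^ 2) / (2 * p.2)) = q p := by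
    intro p hp
    simp only [hqdef]
    field_simp
    ring
  -- q has derivative L at (w, ξ)
  have hq : HasFDerivAt q L (w, ξ) := by
    have hd2ξ : HasDerivAt (fun t : ℝ => 2 * t) 2 ξ := by
      simpa using (hasDerivAt_id ξ).const_mul 2
    have hu : HasDerivAt (fun t => psih t - psih' t * t / 2)
        (psih' ξ - (psih'' ξ * ξ + psih' ξ * 1) / 2) ξ :=
      hψ.sub ((hψ'.mul (hasDerivAt_id ξ)).div_const 2)
    have hv : HasDerivAt (fun t => psih' t / (2 * t))
        ((psih'' ξ * (2 * ξ) - psih' ξ * 2) / (2 * ξ) ^ 2) ξ :=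
      hψ'.div hd2ξ (by positivity)
    have h1 : HasFDerivAt (fun p : ℝ × ℝ => psih p.2 - psih' p.2 * p.2 / 2)
        ((psih' ξ - (psih'' ξ * ξ + psih' ξ * 1) / 2) • ContinuousLinearMap.snd ℝ ℝ ℝ)
        (w, ξ) := by
          have := hu.comp_hasFDerivAt (w, ξ) (hasFDerivAt_snd : HasFDerivAt Prod.snd (ContinuousLinearMap.snd ℝ ℝ ℝ) ((w, ξ) : ℝ × ℝ)); exact this
    have h2 : HasFDerivAt (fun p : ℝ × ℝ => psih' p.2 / (2 * p.2))
        (((psih'' ξ * (2 * ξ) - psih' ξ * 2) / (2 * ξ) ^ 2) •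
          ContinuousLinearMap.snd ℝ ℝ ℝ) (w, ξ) :=
      by have := hv.comp_hasFDerivAt (w, ξ) (hasFDerivAt_snd : HasFDerivAt Prod.snd (ContinuousLinearMap.snd ℝ ℝ ℝ) ((w, ξ) : ℝ × ℝ)); exact this
    have h3 : HasFDerivAt (fun p : ℝ × ℝ => p.1 ^ 2)
        ((2 * w ^ 1 : ℝ) • ContinuousLinearMap.fst ℝ ℝ ℝ) (w, ξ) := by
      have := (hasDerivAt_pow 2 w).comp_hasFDerivAt (w, ξ)
        (hasFDerivAt_fst :
          HasFDerivAt Prod.fst (ContinuousLinearMap.fst ℝ ℝ ℝ) ((w, ξ) : ℝ × ℝ))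
      simpa [Function.comp_def] using this
    refine (h1.add (h2.mul h3)).congr_fderiv ?_
    apply ContinuousLinearMap.ext
    intro v
    simp only [hL, ContinuousLinearMap.add_apply, ContinuousLinearMap.smul_apply,
        ContinuousLinearMap.smulRight_apply, ContinuousLinearMap.coe_fst',
        ContinuousLinearMap.coe_snd', smul_eq_mul,
        ContinuousLinearMap.coe_comp', Function.comp_apply]
    field_simp
    ring
  -- main case split
  rcases lt_or_eq_of_le hwξ with hlt | heq
  · -- interior: |w| < ξ, cohesive is eventually the quadratic branch
    have hopen : IsOpen {p : ℝ × ℝ | |p.1| < p.2} :=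
      isOpen_lt (continuous_fst.abs) continuous_snd
    have hmem : ((w, ξ) : ℝ × ℝ) ∈ {p : ℝ × ℝ | |p.1| < p.2} := hlt
    have hev : (fun p : ℝ × ℝ => cohesive psih psih' p.1 p.2) =ᶠ[nhds ((w, ξ) : ℝ × ℝ)] q := by
      filter_upwards [hopen.mem_nhds hmem] with p hp
      have hp2 : (0:ℝ) < p.2 := lt_of_le_of_lt (abs_nonneg _) hp
      rw [cohesive, if_neg (not_le.mpr hp)]
      exact hqeq p (ne_of_gt hp2)
    exact hq.congr_of_eventuallyEq hev
  · -- boundary: |w| = ξ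
    have habs : |w| = ξ := heq
    have hwne : w ≠ 0 := by
      intro hw0
      rw [hw0, abs_zero] at habs
      exact hξ0 habs.symm
    -- the outer branch also has derivative L at (w, ξ)
    have hb : HasFDerivAt (fun p : ℝ × ℝ => psih |p.1|) L (w, ξ) := by
      rcases hwne.lt_or_gt with hneg | hposw
      · -- w < 0, so w = -ξ
        have hwval : w = -ξ := by
          rw [abs_of_neg hneg] at habs; linarith
        have hd : HasDerivAt psih (psih' ξ) (-(w, ξ).1) := by
          simp only [hwval, neg_neg]; exact hψ
        have h1 : HasFDerivAt (fun p : ℝ × ℝ => psih (-p.1))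
            ((psih' ξ) • (-(ContinuousLinearMap.fst ℝ ℝ ℝ))) (w, ξ) :=
          hd.comp_hasFDerivAt (w, ξ) (hasFDerivAt_fst (p := ((w, ξ) : ℝ × ℝ))).neg
        have hev : (fun p : ℝ × ℝ => psih |p.1|) =ᶠ[nhds ((w, ξ) : ℝ × ℝ)]
            fun p : ℝ × ℝ => psih (-p.1) := by
          have hopen : IsOpen {p : ℝ × ℝ | p.1 < 0} := isOpen_lt continuous_fst continuous_const
          filter_upwards [hopen.mem_nhds (show ((w, ξ) : ℝ × ℝ) ∈ _ from hneg)] with p hp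
          rw [abs_of_neg hp]
        refine (h1.congr_of_eventuallyEq hev).congr_fderiv ?_
        apply ContinuousLinearMap.ext
        intro v
        simp only [hL, ContinuousLinearMap.add_apply, ContinuousLinearMap.smul_apply,
          ContinuousLinearMap.smulRight_apply, ContinuousLinearMap.coe_fst',
          ContinuousLinearMap.coe_snd', smul_eq_mul, ContinuousLinearMap.neg_apply,
          ContinuousLinearMap.coe_comp', Function.comp_apply]
        rw [hwval]
        field_simp
        ring
      · -- w > 0, so w = ξ
        have hwval : w = ξ := by
          rw [abs_of_pos hposw] at habs; exact habs
        have hd : HasDerivAt psih (psih' ξ) ((w, ξ) : ℝ × ℝ).1 := by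
          simp only [hwval]; exact hψ
        have h1 : HasFDerivAt (fun p : ℝ × ℝ => psih p.1)
            ((psih' ξ) • ContinuousLinearMap.fst ℝ ℝ ℝ) (w, ξ) :=
          hd.comp_hasFDerivAt (w, ξ) (hasFDerivAt_fst (p := ((w, ξ) : ℝ × ℝ)))
        have hev : (fun p : ℝ × ℝ => psih |p.1|) =ᶠ[nhds ((w, ξ) : ℝ × ℝ)]
            fun p : ℝ × ℝ => psih p.1 := by
          have hopen : IsOpen {p : ℝ × ℝ | 0 < p.1} := isOpen_lt continuous_const continuous_fst
          filter_upwards [hopen.mem_nhds (show ((w, ξ) : ℝ × ℝ) ∈ _ from hposw)] with p hp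
          rw [abs_of_pos hp]
        refine (h1.congr_of_eventuallyEq hev).congr_fderiv ?_
        apply ContinuousLinearMap.ext
        intro v
        simp only [hL, ContinuousLinearMap.add_apply, ContinuousLinearMap.smul_apply,
          ContinuousLinearMap.smulRight_apply, ContinuousLinearMap.coe_fst',
          ContinuousLinearMap.coe_snd', smul_eq_mul,
          ContinuousLinearMap.coe_comp', Function.comp_apply]
        rw [hwval]
        field_simp
        ring
    -- glue the two branches
    refine glue_hasFDerivAt (g := fun p : ℝ × ℝ => psih |p.1|) (h := q) ?_ ?_ ?_ hb hq
    · intro p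
      by_cases hp : p.2 ≤ |p.1|
      · left; rw [cohesive, if_pos hp]
      · right
        rw [cohesive, if_neg hp]
        have hp2 : (0:ℝ) < p.2 := lt_of_le_of_lt (abs_nonneg _) (not_le.mp hp)
        exact hqeq p (ne_of_gt hp2)
    · rw [cohesive, if_pos (le_of_eq habs.symm)]
    · have hz : ξ ^ 2 - w ^ 2 = 0 := by
        have : w ^ 2 = ξ ^ 2 := by rw [← sq_abs, habs]
        linarith
      show psih |w| = q (w, ξ)
      rw [habs, ← hqeq (w, ξ) hξ0]
      simp [hz]
end

section
/- For every (w,ξ) ∈ ℝ × [0,∞) and φ ∈ ℝ, the one-sided directional derivative D(w,ξ;φ) := lim_{h→0⁺} (ψ(w + hφ, ξ) − ψ(w,ξ))/h exists. Furthermore: (i) if (wₙ,ξₙ) → (w,ξ) in ℝ × [0,∞), then limsup_{n→∞} D(wₙ,ξₙ;φ) ≤ D(w,ξ;φ) for every φ ∈ ℝ; (ii) if φₙ → φ in ℝ, then D(w,ξ;φₙ) → D(w,ξ;φ). -/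
open Filter

/-- From a genuine derivative, the one-sided directional difference quotient converges. -/
lemma dirderiv_of_hasDerivAt (f : ℝ → ℝ) (g w φ : ℝ) (hf : HasDerivAt f g w) :
    Tendsto (fun h : ℝ => (f (w + h * φ) - f w) / h) (nhdsWithin 0 (Set.Ioi 0))
      (nhds (g * φ)) := by
  have hi : HasDerivAt (fun h : ℝ => w + h * φ) φ 0 := by
    simpa using ((hasDerivAt_id (0 : ℝ)).mul_const φ).const_add w
  have hf' : HasDerivAt f g (w + 0 * φ) := by simpa using hf
  have h1 : HasDerivAt (fun h : ℝ => f (w + h * φ)) (g * φ) 0 := hf'.comp 0 hi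
  rw [hasDerivAt_iff_tendsto_slope] at h1
  have h2 := h1.mono_left (nhdsWithin_mono 0 (fun h hh => ne_of_gt hh))
  refine h2.congr' ?_
  filter_upwards [self_mem_nhdsWithin] with h (hh : h ∈ Set.Ioi (0 : ℝ))
  simp [slope_def_field]

set_option maxHeartbeats 1600000 in
/-- the one-sided directional derivative D(w,ξ;φ) of ψ(·,ξ) exists at every
(w,ξ) ∈ ℝ × [0,∞), is upper semicontinuous in (w,ξ), and continuous in φ. -/
theorem cohesive_directional_deriv_usc
    (ξc : ℝ) (hξc : 0 < ξc) (psih psih' psih'' : ℝ → ℝ)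
    (hnn : ∀ w ≥ (0:ℝ), 0 ≤ psih w)
    (hconc : ConcaveOn ℝ (Set.Ici 0) psih)
    (h0 : psih 0 = 0)
    (hpos : ∀ w > (0:ℝ), 0 < psih w)
    (hconst : ∀ w ≥ ξc, psih w = psih ξc)
    (hC1 : ∀ w ∈ Set.Ici (0:ℝ), HasDerivWithinAt psih (psih' w) (Set.Ici 0) w)
    (hC1c : ContinuousOn psih' (Set.Ici 0))
    (hC2 : ∀ w ∈ Set.Icc (0:ℝ) ξc, HasDerivWithinAt psih' (psih'' w) (Set.Icc 0 ξc) w)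
    (hC2c : ContinuousOn psih'' (Set.Icc 0 ξc)) :
    ∃ D : ℝ → ℝ → ℝ → ℝ,
      (∀ w ξ φ : ℝ, 0 ≤ ξ →
        Tendsto (fun h : ℝ =>
            (cohesive psih psih' (w + h * φ) ξ - cohesive psih psih' w ξ) / h)
          (nhdsWithin 0 (Set.Ioi 0)) (nhds (D w ξ φ))) ∧
      (∀ (w ξ φ : ℝ) (wn ξn : ℕ → ℝ), 0 ≤ ξ → (∀ n, 0 ≤ ξn n) →
        Tendsto wn atTop (nhds w) → Tendsto ξn atTop (nhds ξ) →
        Filter.limsup (fun n => D (wn n) (ξn n) φ) atTop ≤ D w ξ φ) ∧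
      (∀ (w ξ φ : ℝ) (φn : ℕ → ℝ), 0 ≤ ξ →
        Tendsto φn atTop (nhds φ) →
        Tendsto (fun n => D w ξ (φn n)) atTop (nhds (D w ξ φ))) := by
  classical
  -- basic facts about psih'
  have hanti : ∀ x y : ℝ, 0 ≤ x → x ≤ y → psih' y ≤ psih' x := by
    intro x y hx hxy
    rcases eq_or_lt_of_le hxy with rfl | hlt
    · exact le_rfl
    · have hy : (0:ℝ) ≤ y := hx.trans hxy
      have h1 : psih' y ≤ slope psih x y :=
        hconc.le_slope_of_hasDerivWithinAt (Set.mem_Ici.mpr hx) (Set.mem_Ici.mpr hy) hlt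
          (hC1 y (Set.mem_Ici.mpr hy))
      have h2 : slope psih x y ≤ psih' x :=
        hconc.slope_le_of_hasDerivWithinAt (Set.mem_Ici.mpr hx) (Set.mem_Ici.mpr hy) hlt
          (hC1 x (Set.mem_Ici.mpr hx))
      linarith
  have hzero : ∀ y : ℝ, ξc < y → psih' y = 0 := by
    intro y hy
    have hy0 : (0:ℝ) < y := hξc.trans hy
    have hev : ∀ᶠ x in nhds y, psih x = psih ξc :=
      (eventually_gt_nhds hy).mono fun x hx => hconst x hx.le
    have h1 : HasDerivAt psih 0 y :=
      (hasDerivAt_const y (psih ξc)).congr_of_eventuallyEq hev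
    have h2 : HasDerivAt psih (psih' y) y :=
      (hC1 y (Set.mem_Ici.mpr hy0.le)).hasDerivAt (Ici_mem_nhds hy0)
    exact h2.unique h1
  have hnonneg : ∀ x : ℝ, 0 ≤ x → 0 ≤ psih' x := by
    intro x hx
    have h1 : psih' (max x ξc + 1) = 0 :=
      hzero _ (lt_of_le_of_lt (le_max_right x ξc) (lt_add_one _))
    have h2 : psih' (max x ξc + 1) ≤ psih' x :=
      hanti x _ hx ((le_max_left x ξc).trans (le_add_of_nonneg_right zero_le_one))
    linarith
  have hle0 : ∀ x : ℝ, 0 ≤ x → psih' x ≤ psih' 0 := fun x hx => hanti 0 x le_rfl hx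
  -- derivative of the quadratic branch
  have hq : ∀ ξ u : ℝ, ξ ≠ 0 →
      HasDerivAt (fun x : ℝ => psih ξ - psih' ξ * ((ξ ^ 2 - x ^ 2) / (2 * ξ)))
        (psih' ξ * (u / ξ)) u := by
    intro ξ u hne
    have h2 : HasDerivAt (fun x : ℝ => x ^ 2) (2 * u) u := by
      simpa [mul_comm] using hasDerivAt_pow 2 u
    have h3 := (((hasDerivAt_const u (ξ ^ 2)).sub h2).div_const (2 * ξ)).const_mul (psih' ξ)
    have h4 : HasDerivAt (fun x : ℝ => psih ξ - psih' ξ * ((ξ ^ 2 - x ^ 2) / (2 * ξ)))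
        (0 - psih' ξ * ((0 - 2 * u) / (2 * ξ))) u := (hasDerivAt_const u (psih ξ)).sub h3
    convert h4 using 1
    field_simp
    ring
  -- evenness in w
  have heven : ∀ x ξ : ℝ, cohesive psih psih' (-x) ξ = cohesive psih psih' x ξ := by
    intro x ξ; simp [cohesive, abs_neg, neg_sq]
  -- the derivative of cohesive in w, for nonneg w
  have key : ∀ ξ w : ℝ, 0 ≤ ξ → 0 ≤ w → ¬(w = 0 ∧ ξ = 0) →
      HasDerivAt (fun x => cohesive psih psih' x ξ)
        (psih' (max |w| ξ) * (w / max |w| ξ)) w := by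
    intro ξ w hξ hw hc
    rcases lt_trichotomy w ξ with hwξ | hwξ | hwξ
    · -- w < ξ : quadratic branch
      have hξ0 : (0:ℝ) < ξ := lt_of_le_of_lt hw hwξ
      have hd := hq ξ w hξ0.ne'
      have hev : ∀ᶠ x in nhds w, cohesive psih psih' x ξ =
          psih ξ - psih' ξ * ((ξ ^ 2 - x ^ 2) / (2 * ξ)) := by
        have : Set.Ioo (-ξ) ξ ∈ nhds w :=
          Ioo_mem_nhds (lt_of_lt_of_le (neg_neg_iff_pos.mpr hξ0) hw) hwξ
        filter_upwards [this] with x hx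
        rw [cohesive, if_neg (not_le.mpr (abs_lt.mpr ⟨hx.1, hx.2⟩))]
      have hmax : max |w| ξ = ξ := max_eq_right (by rw [abs_of_nonneg hw]; exact hwξ.le)
      rw [hmax]
      exact hd.congr_of_eventuallyEq hev
    · -- w = ξ > 0 : glue the two branches
      subst hwξ
      have hξ0 : (0:ℝ) < w := by
        rcases hw.lt_or_eq with h | h
        · exact h
        · exact absurd ⟨h.symm, h.symm⟩ hc
      have hIci : HasDerivWithinAt (fun x => cohesive psih psih' x w) (psih' w)
          (Set.Ici w) w := by
        have h1 : HasDerivWithinAt psih (psih' w) (Set.Ici w) w :=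
          (hC1 w (Set.mem_Ici.mpr hξ0.le)).mono (Set.Ici_subset_Ici.mpr hξ0.le)
        refine h1.congr (fun x hx => ?_) ?_
        · have hx' : (0:ℝ) ≤ x := hξ0.le.trans hx
          rw [cohesive, abs_of_nonneg hx', if_pos (show w ≤ x from hx)]
        · rw [cohesive, abs_of_nonneg hξ0.le, if_pos le_rfl]
      have hIic : HasDerivWithinAt (fun x => cohesive psih psih' x w) (psih' w)
          (Set.Iic w) w := by
        have hd : HasDerivAt (fun x : ℝ => psih w - psih' w * ((w ^ 2 - x ^ 2) / (2 * w)))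
            (psih' w) w := by
          have := hq w w hξ0.ne'
          rwa [div_self hξ0.ne', mul_one] at this
        refine (hd.hasDerivWithinAt).congr_of_eventuallyEq ?_ ?_
        · have hmem : Set.Ioi (-w) ∈ nhds w := Ioi_mem_nhds (by linarith)
          filter_upwards [nhdsWithin_le_nhds hmem, self_mem_nhdsWithin] with x hx1
            (hx2 : x ∈ Set.Iic w)
          rcases eq_or_lt_of_le (Set.mem_Iic.mp hx2) with rfl | hlt
          · rw [cohesive, abs_of_nonneg hξ0.le, if_pos le_rfl]
            simp
          · rw [cohesive, if_neg (not_le.mpr (abs_lt.mpr ⟨hx1, hlt⟩))]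
        · rw [cohesive, abs_of_nonneg hξ0.le, if_pos le_rfl]
          simp
      have hcomb := hIic.union hIci
      rw [Set.Iic_union_Ici, hasDerivWithinAt_univ] at hcomb
      have hmax : max |w| w = w := by rw [abs_of_nonneg hξ0.le, max_self]
      rw [hmax, div_self hξ0.ne', mul_one]
      exact hcomb
    · -- ξ < w : psih branch
      have hw0 : (0:ℝ) < w := lt_of_le_of_lt hξ hwξ
      have h1 : HasDerivAt psih (psih' w) w :=
        (hC1 w (Set.mem_Ici.mpr hw0.le)).hasDerivAt (Ici_mem_nhds hw0)
      have hev : ∀ᶠ x in nhds w, cohesive psih psih' x ξ = psih x := by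
        filter_upwards [eventually_gt_nhds hwξ, eventually_gt_nhds hw0] with x hx1 hx2
        rw [cohesive, abs_of_nonneg hx2.le, if_pos hx1.le]
      have hmax : max |w| ξ = w := by
        rw [abs_of_nonneg hw0.le]; exact max_eq_left hwξ.le
      rw [hmax, div_self hw0.ne', mul_one]
      exact h1.congr_of_eventuallyEq hev
  -- full derivative statement
  have hderiv : ∀ ξ w : ℝ, 0 ≤ ξ → ¬(w = 0 ∧ ξ = 0) →
      HasDerivAt (fun x => cohesive psih psih' x ξ)
        (psih' (max |w| ξ) * (w / max |w| ξ)) w := by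
    intro ξ w hξ hc
    rcases le_or_gt 0 w with hw | hw
    · exact key ξ w hξ hw hc
    · have hc' : ¬(-w = 0 ∧ ξ = 0) := by
        rintro ⟨h1, h2⟩; exact hc ⟨by linarith, h2⟩
      have h := key ξ (-w) hξ (by linarith) hc'
      have h2 := h.comp w (hasDerivAt_neg w)
      have h3 : HasDerivAt (fun x => cohesive psih psih' (-x) ξ)
          (psih' (max |(-w)| ξ) * (-w / max |(-w)| ξ) * (-1)) w := h2
      have h4 := h3.congr_of_eventuallyEq
        (Eventually.of_forall fun x => (heven x ξ).symm)
      have : psih' (max |(-w)| ξ) * (-w / max |(-w)| ξ) * (-1)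
          = psih' (max |w| ξ) * (w / max |w| ξ) := by
        rw [abs_neg]; ring
      rwa [this] at h4
  -- positivity of max when not both zero
  have hmpos : ∀ w ξ : ℝ, 0 ≤ ξ → ¬(w = 0 ∧ ξ = 0) → 0 < max |w| ξ := by
    intro w ξ hξ hc
    rcases lt_or_eq_of_le hξ with h | h
    · exact lt_of_lt_of_le h (le_max_right _ _)
    · rcases (abs_nonneg w).lt_or_eq with h2 | h2
      · exact lt_of_lt_of_le h2 (le_max_left _ _)
      · exact absurd ⟨abs_eq_zero.mp h2.symm, h.symm⟩ hc
  -- pointwise bound D ≤ psih' 0 * |φ|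
  refine ⟨fun w ξ φ => if w = 0 ∧ ξ = 0 then psih' 0 * |φ|
    else psih' (max |w| ξ) * (w / max |w| ξ) * φ, ?_, ?_, ?_⟩
  · -- existence of the directional derivative
    intro w ξ φ hξ
    beta_reduce
    by_cases hc : w = 0 ∧ ξ = 0
    · obtain ⟨rfl, rfl⟩ := hc
      rw [if_pos (⟨rfl, rfl⟩ : (0:ℝ) = 0 ∧ (0:ℝ) = 0)]
      have hco0 : cohesive psih psih' 0 0 = 0 := by
        rw [cohesive, if_pos (le_of_eq (abs_zero).symm)]
        simpa using h0
      by_cases hφ : φ = 0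
      · subst hφ
        rw [abs_zero, mul_zero]
        refine Tendsto.congr' ?_ tendsto_const_nhds
        filter_upwards with h
        simp [hco0]
      · have hφ0 : (0:ℝ) < |φ| := abs_pos.mpr hφ
        have hslope : Tendsto (fun t : ℝ => psih t / t) (nhdsWithin 0 (Set.Ioi 0))
            (nhds (psih' 0)) := by
          have h1 := (hC1 0 (Set.mem_Ici.mpr le_rfl))
          rw [hasDerivWithinAt_iff_tendsto_slope] at h1
          have hset : Set.Ici (0:ℝ) \ {0} = Set.Ioi 0 := by
            ext x; simp [Set.mem_diff, lt_iff_le_and_ne, eq_comm]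
          rw [hset] at h1
          refine h1.congr fun t => ?_
          rw [slope_def_field, h0]
          ring_nf
        have hmap : Tendsto (fun h : ℝ => h * |φ|) (nhdsWithin 0 (Set.Ioi 0))
            (nhdsWithin 0 (Set.Ioi 0)) := by
          refine tendsto_nhdsWithin_of_tendsto_nhds_of_eventually_within _ ?_ ?_
          · have := (tendsto_id.mul_const |φ|).mono_left
              (nhdsWithin_le_nhds : nhdsWithin (0:ℝ) (Set.Ioi 0) ≤ nhds 0)
            simpa using this
          · filter_upwards [self_mem_nhdsWithin] with h (hh : h ∈ Set.Ioi (0:ℝ))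
            exact mul_pos hh hφ0
        have hcomp := (hslope.comp hmap).mul_const |φ|
        refine hcomp.congr' ?_
        filter_upwards [self_mem_nhdsWithin] with h (hh : h ∈ Set.Ioi (0:ℝ))
        have hne : h ≠ 0 := ne_of_gt hh
        have habs : |h * φ| = h * |φ| := by rw [abs_mul, abs_of_pos hh]
        rw [Function.comp]
        rw [show (0:ℝ) + h * φ = h * φ by ring]
        rw [hco0, sub_zero, cohesive, if_pos (abs_nonneg _), habs]
        field_simp
    · rw [if_neg hc]
      exact dirderiv_of_hasDerivAt _ _ w φ (hderiv ξ w hξ hc)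
  · -- upper semicontinuity
    intro w ξ φ wn ξn hξ hξn hwt hξt
    beta_reduce
    by_cases hc : w = 0 ∧ ξ = 0
    · obtain ⟨rfl, rfl⟩ := hc
      have hbb : ∀ n, |if wn n = 0 ∧ ξn n = 0 then psih' 0 * |φ|
          else psih' (max |wn n| (ξn n)) * (wn n / max |wn n| (ξn n)) * φ|
          ≤ psih' 0 * |φ| := by
        intro n
        by_cases hcn : wn n = 0 ∧ ξn n = 0
        · rw [if_pos hcn, abs_of_nonneg (mul_nonneg (hnonneg 0 le_rfl) (abs_nonneg _))]
        · rw [if_neg hcn]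
          set m := max |wn n| (ξn n) with hmdef
          have hm0 : 0 < m := hmpos _ _ (hξn n) hcn
          have h2 : |psih' m * (wn n / m) * φ| = psih' m * |wn n / m| * |φ| := by
            rw [abs_mul, abs_mul, abs_of_nonneg (hnonneg m hm0.le)]
          have h3 : |wn n / m| ≤ 1 := by
            rw [abs_div, abs_of_pos hm0]
            exact div_le_one_of_le₀ (le_max_left _ _) hm0.le
          have h4 : psih' m * |wn n / m| ≤ psih' 0 * 1 :=
            mul_le_mul (hle0 m hm0.le) h3 (abs_nonneg _) (hnonneg 0 le_rfl)
          have h5 : psih' m * |wn n / m| * |φ| ≤ psih' 0 * 1 * |φ| :=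
            mul_le_mul_of_nonneg_right h4 (abs_nonneg _)
          calc |psih' m * (wn n / m) * φ| = psih' m * |wn n / m| * |φ| := h2
            _ ≤ psih' 0 * 1 * |φ| := h5
            _ = psih' 0 * |φ| := by ring
      have hb : ∀ n, (if wn n = 0 ∧ ξn n = 0 then psih' 0 * |φ|
          else psih' (max |wn n| (ξn n)) * (wn n / max |wn n| (ξn n)) * φ)
          ≤ psih' 0 * |φ| := fun n => (le_abs_self _).trans (hbb n)
      have hlb : ∀ n, -(psih' 0 * |φ|) ≤ (if wn n = 0 ∧ ξn n = 0 then psih' 0 * |φ|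
          else psih' (max |wn n| (ξn n)) * (wn n / max |wn n| (ξn n)) * φ) :=
        fun n => (abs_le.mp (hbb n)).1
      rw [if_pos (⟨rfl, rfl⟩ : (0:ℝ) = 0 ∧ (0:ℝ) = 0)]
      exact Filter.limsup_le_of_le (isCoboundedUnder_le_of_eventually_le atTop
        (Eventually.of_forall hlb)) (Eventually.of_forall hb)
    · set m := max |w| ξ with hmdef
      have hm0 : 0 < m := hmpos _ _ hξ hc
      have hmn : Tendsto (fun n => max |wn n| (ξn n)) atTop (nhds m) :=
        (hwt.abs).max hξt
      have hpos : ∀ᶠ n in atTop, 0 < max |wn n| (ξn n) :=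
        hmn.eventually (eventually_gt_nhds hm0)
      have hcont : ContinuousAt psih' m :=
        hC1c.continuousAt (Ici_mem_nhds hm0)
      have htend : Tendsto (fun n => psih' (max |wn n| (ξn n)) *
          (wn n / max |wn n| (ξn n)) * φ) atTop (nhds (psih' m * (w / m) * φ)) :=
        (((hcont.tendsto.comp hmn).mul (hwt.div hmn hm0.ne')).mul_const φ)
      have heq : (fun n => if wn n = 0 ∧ ξn n = 0 then psih' 0 * |φ|
          else psih' (max |wn n| (ξn n)) * (wn n / max |wn n| (ξn n)) * φ)
          =ᶠ[atTop] (fun n => psih' (max |wn n| (ξn n)) * (wn n / max |wn n| (ξn n)) * φ) := by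
        filter_upwards [hpos] with n hn
        have : ¬(wn n = 0 ∧ ξn n = 0) := by
          rintro ⟨h1, h2⟩; rw [h1, h2] at hn; simp at hn
        rw [if_neg this]
      have htend2 := htend.congr' heq.symm
      rw [if_neg hc, htend2.limsup_eq]
  · -- continuity in φ
    intro w ξ φ φn hξ hφt
    beta_reduce
    by_cases hc : w = 0 ∧ ξ = 0
    · simp only [if_pos hc]
      exact (hφt.abs).const_mul (psih' 0)
    · simp only [if_neg hc]
      exact hφt.const_mul _
end

section
/- Let H be a real Hilbert space, F : H → ℝ, and u, ζ ∈ H. Assume: (i) there exists c ≥ 0 such that the map w ↦ F(w) + c·‖w − u‖² is convex on H; (ii) for every φ ∈ H the one-sided directional derivative F'(u;φ) := lim_{h→0⁺} (F(u + hφ) − F(u))/h exists; (iii) whenever a sequence (φ_k) converges weakly to φ in H, one has liminf_{k→∞} (F'(u;φ_k) − ⟨ζ, φ_k⟩) ≥ F'(u;φ) − ⟨ζ, φ⟩. Then the following are equivalent: (a) ζ is a subderivative, i.e. F'(u;φ) ≥ ⟨ζ, φ⟩ for every φ ∈ H; (b) ζ belongs to the limiting subdifferential of F at u, i.e. liminf_{w→u,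 w≠u} (F(w) − F(u) − ⟨ζ, w − u⟩)/‖w − u‖ ≥ 0. -/
open Filter

/-- in a real Hilbert space, for a λ-convex functional F whose directional
derivatives at u exist and satisfy a weak sequential lower semicontinuity property,
ζ is a subderivative (F'(u;φ) ≥ ⟨ζ,φ⟩ for all φ) if and only if ζ belongs to the
limiting subdifferential of F at u. -/
theorem subderivative_iff_limiting_subdifferential
    {H : Type*} [NormedAddCommGroup H] [InnerProductSpace ℝ H] [CompleteSpace H]
    (F : H → ℝ) (u ζ : H) (DF : H → ℝ)
    (hconv : ∃ c : ℝ, 0 ≤ c ∧ ConvexOn ℝ Set.univ (fun w => F w + c * ‖w - u‖ ^ 2))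
    (hDF : ∀ φ : H,
      Tendsto (fun h : ℝ => (F (u + h • φ) - F u) / h)
        (nhdsWithin 0 (Set.Ioi 0)) (nhds (DF φ)))
    (hwlsc : ∀ (φk : ℕ → H) (φ : H),
      (∀ y : H, Tendsto (fun k => (inner ℝ (φk k) y : ℝ)) atTop (nhds (inner ℝ φ y))) →
      ∀ ε > (0:ℝ), ∀ᶠ k in atTop,
        DF φ - (inner ℝ ζ φ : ℝ) - ε ≤ DF (φk k) - (inner ℝ ζ (φk k) : ℝ)) :
    (∀ φ : H, (inner ℝ ζ φ : ℝ) ≤ DF φ) ↔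
      (∀ ε > (0:ℝ), ∀ᶠ w in nhdsWithin u {u}ᶜ,
        -ε ≤ (F w - F u - (inner ℝ ζ (w - u) : ℝ)) / ‖w - u‖) := by
  constructor
  · -- subderivative → limiting subdifferential
    intro hsub ε hε
    obtain ⟨c, hc, hG⟩ := hconv
    have key : ∀ w : H, DF (w - u) ≤ F w - F u + c * ‖w - u‖ ^ 2 := by
      intro w
      refine le_of_tendsto (hDF (w - u)) ?_
      have hmem : Set.Ioo (0:ℝ) 1 ∈ nhdsWithin (0:ℝ) (Set.Ioi 0) := by
        apply mem_nhdsWithin.2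
        refine ⟨Set.Iio 1, isOpen_Iio, by norm_num, ?_⟩
        rintro x ⟨hx1, hx2⟩; exact ⟨hx2, hx1⟩
      filter_upwards [hmem] with h hh
      obtain ⟨h0, h1⟩ := hh
      have hcv := hG.2 (Set.mem_univ u) (Set.mem_univ w)
        (by linarith : (0:ℝ) ≤ 1 - h) h0.le (by ring)
      have heq : (1 - h) • u + h • w = u + h • (w - u) := by
        rw [smul_sub, sub_smul, one_smul]; abel
      rw [heq] at hcv
      simp only [smul_eq_mul] at hcv
      have hn : ‖u + h • (w - u) - u‖ ^ 2 = h ^ 2 * ‖w - u‖ ^ 2 := by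
        rw [add_sub_cancel_left, norm_smul, Real.norm_eq_abs, abs_of_pos h0]
        ring
      rw [hn, sub_self u, norm_zero] at hcv
      have hN : (0:ℝ) ≤ ‖w - u‖ ^ 2 := by positivity
      rw [div_le_iff₀ h0]
      nlinarith [mul_nonneg (mul_nonneg hc (sq_nonneg h)) hN]
    have hδ : (0:ℝ) < ε / (c + 1) := by positivity
    have h1 : ∀ᶠ w in nhdsWithin u {u}ᶜ, dist w u < ε / (c + 1) :=
      Filter.Eventually.filter_mono nhdsWithin_le_nhds
        (Metric.eventually_nhds_iff_ball.2 ⟨ε / (c + 1), hδ, fun y hy => by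
          simpa [Metric.mem_ball] using hy⟩)
    have h2 : ∀ᶠ w in nhdsWithin u {u}ᶜ, w ∈ ({u}ᶜ : Set H) := self_mem_nhdsWithin
    filter_upwards [h1, h2] with w hw1 hw2
    have hwne : w ≠ u := by simpa using hw2
    have hr : (0:ℝ) < ‖w - u‖ := by
      rw [norm_pos_iff]; exact sub_ne_zero.2 hwne
    have hkey := key w
    have hsub' := hsub (w - u)
    rw [le_div_iff₀ hr]
    have hdist : ‖w - u‖ < ε / (c + 1) := by rwa [dist_eq_norm] at hw1
    have : (c + 1) * ‖w - u‖ < ε := by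
      have h3 := (lt_div_iff₀ (by positivity : (0:ℝ) < c + 1)).1 hdist
      nlinarith
    nlinarith [hr, hc, mul_nonneg hc hr.le]
  · -- limiting subdifferential → subderivative
    intro hlim φ
    by_cases hφ : φ = 0
    · subst hφ
      have h0 : DF 0 = 0 := by
        have := hDF 0
        simp only [smul_zero, add_zero, sub_self, zero_div] at this
        exact tendsto_nhds_unique this tendsto_const_nhds
      simp [h0]
    · have hnφ : (0:ℝ) < ‖φ‖ := norm_pos_iff.2 hφ
      have main : ∀ ε > (0:ℝ), (inner ℝ ζ φ : ℝ) - ε ≤ DF φ := by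
        intro ε hε
        have hε' : (0:ℝ) < ε / ‖φ‖ := by positivity
        have hev := hlim (ε / ‖φ‖) hε'
        have hmap : Tendsto (fun h : ℝ => u + h • φ) (nhdsWithin 0 (Set.Ioi 0))
            (nhdsWithin u {u}ᶜ) := by
          apply tendsto_nhdsWithin_of_tendsto_nhds_of_eventually_within
          · have : Tendsto (fun h : ℝ => u + h • φ) (nhds 0) (nhds u) := by
              have : Continuous (fun h : ℝ => u + h • φ) := by continuity
              simpa using this.tendsto 0
            exact this.mono_left nhdsWithin_le_nhds
          · filter_upwards [self_mem_nhdsWithin] with h hh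
            simp only [Set.mem_compl_iff, Set.mem_singleton_iff]
            intro hcon
            have hsm : h • φ = 0 := by rwa [add_eq_left] at hcon
            rcases smul_eq_zero.1 hsm with h' | h'
            · exact (Set.mem_Ioi.1 hh).ne' h'
            · exact hφ h'
        refine ge_of_tendsto (hDF φ) ?_
        filter_upwards [hmap.eventually hev, self_mem_nhdsWithin] with h hh hh0
        have hh0' : (0:ℝ) < h := hh0
        have hns : ‖u + h • φ - u‖ = h * ‖φ‖ := by
          rw [add_sub_cancel_left, norm_smul, Real.norm_eq_abs, abs_of_pos hh0']
        have hin : (inner ℝ ζ (u + h • φ - u) : ℝ) = h * inner ℝ ζ φ := by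
          rw [add_sub_cancel_left, inner_smul_right]
        rw [hns, hin, le_div_iff₀ (by positivity : (0:ℝ) < h * ‖φ‖)] at hh
        rw [le_div_iff₀ hh0']
        have : -(ε / ‖φ‖) * (h * ‖φ‖) = -(ε * h) := by
          field_simp
        rw [this] at hh
        nlinarith
      by_contra hcon
      push_neg at hcon
      have := main (((inner ℝ ζ φ : ℝ) - DF φ) / 2) (by linarith)
      linarith
end

section
/- Let α > 0 and ξ_c > 0. Suppose ψ̂ : (0,ξ_c] → ℝ is differentiable and satisfies the equation ψ̂(ξ) − (1/2)·ψ̂'(ξ)·ξ = α·ξ for every ξ ∈ (0,ξ_c], together with the boundary condition ψ̂'(ξ_c) = 0. Then ψ̂(ξ) = α·ξ·(2 − ξ/ξ_c) for every ξ ∈ (0,ξ_c]. -/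
/-- if ψ̂ is differentiable on (0,ξ_c] and satisfies
ψ̂(ξ) − (1/2)ψ̂'(ξ)ξ = αξ there, with ψ̂'(ξ_c) = 0, then
ψ̂(ξ) = αξ(2 − ξ/ξ_c) on (0,ξ_c]. -/
theorem linear_dissipation_forces_quadratic_profile
    (α ξc : ℝ) (hα : 0 < α) (hξc : 0 < ξc)
    (psih psih' : ℝ → ℝ)
    (hder : ∀ ξ ∈ Set.Ioc (0:ℝ) ξc, HasDerivWithinAt psih (psih' ξ) (Set.Ioc 0 ξc) ξ)
    (hode : ∀ ξ ∈ Set.Ioc (0:ℝ) ξc, psih ξ - 1 / 2 * psih' ξ * ξ = α * ξ)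
    (hbc : psih' ξc = 0) :
    ∀ ξ ∈ Set.Ioc (0:ℝ) ξc, psih ξ = α * ξ * (2 - ξ / ξc) := by
  intro ξ hξ
  set f : ℝ → ℝ := fun x => psih x / x ^ 2 - 2 * α / x with hf
  have hpcont : ContinuousOn psih (Set.Ioc 0 ξc) :=
    fun x hx => (hder x hx).continuousWithinAt
  have hsub : Set.Icc ξ ξc ⊆ Set.Ioc 0 ξc :=
    fun x hx => ⟨lt_of_lt_of_le hξ.1 hx.1, hx.2⟩
  have hcont : ContinuousOn f (Set.Icc ξ ξc) := by
    apply ContinuousOn.sub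
    · exact (hpcont.mono hsub).div ((continuous_pow 2).continuousOn)
        (fun x hx => pow_ne_zero _ (ne_of_gt (lt_of_lt_of_le hξ.1 hx.1)))
    · exact continuousOn_const.div continuousOn_id
        (fun x hx => ne_of_gt (lt_of_lt_of_le hξ.1 hx.1))
  have hderiv0 : ∀ x ∈ Set.Ico ξ ξc, HasDerivWithinAt f 0 (Set.Ici x) x := by
    intro x hx
    have hx0 : (0:ℝ) < x := lt_of_lt_of_le hξ.1 hx.1
    have hmem : x ∈ Set.Ioc (0:ℝ) ξc := ⟨hx0, le_of_lt hx.2⟩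
    have hnhds : Set.Ioc (0:ℝ) ξc ∈ nhds x := Ioc_mem_nhds hx0 hx.2
    have hda : HasDerivAt psih (psih' x) x := (hder x hmem).hasDerivAt hnhds
    have h1 : HasDerivAt (fun y => psih y / y ^ 2)
        ((psih' x * x ^ 2 - psih x * ((2:ℕ) * x ^ 1)) / (x ^ 2) ^ 2) x :=
      hda.div (hasDerivAt_pow 2 x) (pow_ne_zero _ hx0.ne')
    have h2 : HasDerivAt (fun y => 2 * α / y) (2 * α * (-(x ^ 2)⁻¹)) x := by
      simpa [div_eq_mul_inv] using (hasDerivAt_inv hx0.ne').const_mul (2 * α)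
    have h3 := h1.sub h2
    have hrel := hode x hmem
    have : (psih' x * x ^ 2 - psih x * ((2:ℕ) * x ^ 1)) / (x ^ 2) ^ 2
        - 2 * α * (-(x ^ 2)⁻¹) = 0 := by
      have hx2 : x ^ 2 ≠ 0 := pow_ne_zero _ hx0.ne'
      field_simp
      push_cast
      nlinarith [hrel]
    rw [this] at h3
    exact h3.hasDerivWithinAt
  have hconst := constant_of_has_deriv_right_zero hcont hderiv0 ξc ⟨hξ.2, le_refl ξc⟩
  -- hconst : f ξc = f ξ
  have hpsic : psih ξc = α * ξc := by
    have := hode ξc ⟨hξc, le_refl ξc⟩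
    rw [hbc] at this
    linarith
  have hfc : α * ξc / ξc ^ 2 - 2 * α / ξc = psih ξ / ξ ^ 2 - 2 * α / ξ := by
    simpa [hf, hpsic] using hconst
  have hξ0 : (0:ℝ) < ξ := hξ.1
  field_simp at hfc
  have h2 : psih ξ * (ξ * ξc ^ 3) = 2 * α * ξ ^ 2 * ξc ^ 3 - α * ξ ^ 3 * ξc ^ 2 := by
    linear_combination (-(ξ * ξc ^ 2)) * hfc
  have hr : α * ξ * (2 - ξ / ξc) * (ξ * ξc ^ 3) = 2 * α * ξ ^ 2 * ξc ^ 3 - α * ξ ^ 3 * ξc ^ 2 := by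
    field_simp
  exact mul_right_cancel₀ (by positivity : (ξ * ξc ^ 3) ≠ 0) (h2.trans hr.symm)
end

section
/- Assume (H1) and (H2), set β := −min{ψ̂''(w) : w ∈ [0,ξ_c]}, and for ξ > 0 set c_ξ := ψ̂'(ξ)/ξ. Let 0 < ξ₁ ≤ ξ₂ and w₁, w₂ ∈ ℝ satisfy |w₁| ≤ ξ₁, |w₂| ≤ ξ₂ and w₁ ≠ w₂, and assume that |w₂| = ξ₂ whenever ξ₁ < ξ₂. Then −β ≤ (c_{ξ₂}·w₂ − c_{ξ₁}·w₁)/(w₂ − w₁) ≤ c_{ξ₁}. -/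
open Set Filter Topology

/-- bounds on the incremental cohesive stiffness
α = (c_{ξ₂}w₂ − c_{ξ₁}w₁)/(w₂ − w₁), where c_ξ = ψ̂'(ξ)/ξ:
under (H1), (H2), with 0 < ξ₁ ≤ ξ₂, |w₁| ≤ ξ₁, |w₂| ≤ ξ₂, w₁ ≠ w₂ and
|w₂| = ξ₂ whenever ξ₁ < ξ₂, one has −β ≤ α ≤ c_{ξ₁}. -/
theorem incremental_stiffness_bounds
    (ξc : ℝ) (hξc : 0 < ξc) (psih psih' psih'' : ℝ → ℝ)
    (hnn : ∀ w ≥ (0:ℝ), 0 ≤ psih w)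
    (hconc : ConcaveOn ℝ (Set.Ici 0) psih)
    (h0 : psih 0 = 0)
    (hpos : ∀ w > (0:ℝ), 0 < psih w)
    (hconst : ∀ w ≥ ξc, psih w = psih ξc)
    (hC1 : ∀ w ∈ Set.Ici (0:ℝ), HasDerivWithinAt psih (psih' w) (Set.Ici 0) w)
    (hC1c : ContinuousOn psih' (Set.Ici 0))
    (hC2 : ∀ w ∈ Set.Icc (0:ℝ) ξc, HasDerivWithinAt psih' (psih'' w) (Set.Icc 0 ξc) w)
    (hC2c : ContinuousOn psih'' (Set.Icc 0 ξc))
    (β : ℝ) (hβ : IsLeast (psih'' '' Set.Icc 0 ξc) (-β))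
    (ξ₁ ξ₂ w₁ w₂ : ℝ) (hξ₁ : 0 < ξ₁) (hξ₁₂ : ξ₁ ≤ ξ₂)
    (hw₁ : |w₁| ≤ ξ₁) (hw₂ : |w₂| ≤ ξ₂) (hne : w₁ ≠ w₂)
    (hcase : ξ₁ < ξ₂ → |w₂| = ξ₂) :
    -β ≤ (psih' ξ₂ / ξ₂ * w₂ - psih' ξ₁ / ξ₁ * w₁) / (w₂ - w₁) ∧
    (psih' ξ₂ / ξ₂ * w₂ - psih' ξ₁ / ξ₁ * w₁) / (w₂ - w₁) ≤ psih' ξ₁ / ξ₁ := by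
  have hξc' : (0:ℝ) ≤ ξc := hξc.le
  -- ψ' is antitone on [0,∞)
  have A : ∀ x y : ℝ, 0 ≤ x → x ≤ y → psih' y ≤ psih' x := by
    intro x y hx hxy
    rcases eq_or_lt_of_le hxy with rfl | h
    · exact le_rfl
    · have hy : y ∈ Set.Ici (0:ℝ) := Set.mem_Ici.2 (hx.trans hxy)
      have h1 := hconc.le_slope_of_hasDerivWithinAt (Set.mem_Ici.2 hx) hy h (hC1 y hy)
      have h2 := hconc.slope_le_of_hasDerivWithinAt (Set.mem_Ici.2 hx) hy h
        (hC1 x (Set.mem_Ici.2 hx))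
      exact h1.trans h2
  -- ψ' vanishes strictly beyond ξc
  have Zgt : ∀ y : ℝ, ξc < y → psih' y = 0 := by
    intro y hy
    have hy0 : (0:ℝ) ≤ y := hξc'.trans hy.le
    have hy1 : (0:ℝ) ≤ y + 1 := by linarith
    have hs1 : slope psih ξc y = 0 := by
      rw [slope_def_field, hconst y hy.le, sub_self, zero_div]
    have hs2 : slope psih y (y + 1) = 0 := by
      rw [slope_def_field, hconst y hy.le, hconst (y + 1) (by linarith), sub_self, zero_div]
    have h1 := hconc.le_slope_of_hasDerivWithinAt (Set.mem_Ici.2 hξc')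
      (Set.mem_Ici.2 hy0) hy (hC1 y (Set.mem_Ici.2 hy0))
    have h2 := hconc.slope_le_of_hasDerivWithinAt (Set.mem_Ici.2 hy0)
      (Set.mem_Ici.2 hy1) (by linarith) (hC1 y (Set.mem_Ici.2 hy0))
    rw [hs1] at h1; rw [hs2] at h2
    linarith
  -- ψ'(ξc) = 0 by continuity
  have Zc : psih' ξc = 0 := by
    have hcw : ContinuousWithinAt psih' (Set.Ici 0) ξc := hC1c ξc (Set.mem_Ici.2 hξc')
    have hsub : Set.Ioi ξc ⊆ Set.Ici (0:ℝ) := fun x hx => le_of_lt (hξc.trans hx)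
    have ht : Tendsto psih' (𝓝[>] ξc) (𝓝 (psih' ξc)) :=
      hcw.tendsto.mono_left (nhdsWithin_mono _ hsub)
    have heq : psih' =ᶠ[𝓝[>] ξc] fun _ => (0:ℝ) :=
      eventually_nhdsWithin_of_forall (fun x hx => Zgt x hx)
    have ht0 : Tendsto psih' (𝓝[>] ξc) (𝓝 0) := by
      rw [tendsto_congr' heq]; exact tendsto_const_nhds
    exact tendsto_nhds_unique ht ht0
  have Z : ∀ y : ℝ, ξc ≤ y → psih' y = 0 := by
    intro y hy
    rcases eq_or_lt_of_le hy with rfl | h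
    · exact Zc
    · exact Zgt y h
  -- ψ' nonnegative
  have N : ∀ x : ℝ, 0 ≤ x → 0 ≤ psih' x := by
    intro x hx
    rcases le_total x ξc with h | h
    · have := A x ξc hx h; rw [Zc] at this; exact this
    · rw [Z x h]
  -- ψ'' is ≤ 0 at the midpoint, hence β ≥ 0
  have hβ0 : 0 ≤ β := by
    set m := ξc / 2 with hm_def
    have hm : m ∈ Set.Icc (0:ℝ) ξc := ⟨by positivity, by linarith⟩
    have hmlt : m < ξc := by simp only [hm_def]; linarith
    have hψ''m : psih'' m ≤ 0 := by
      have hd := hC2 m hm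
      rw [hasDerivWithinAt_iff_tendsto_slope] at hd
      have hsub : Set.Ioo m ξc ⊆ Set.Icc (0:ℝ) ξc \ {m} := by
        intro x hx
        exact ⟨⟨le_trans hm.1 hx.1.le, hx.2.le⟩, ne_of_gt hx.1⟩
      have hmono : Tendsto (slope psih' m) (𝓝[Set.Ioo m ξc] m) (𝓝 (psih'' m)) :=
        hd.mono_left (nhdsWithin_mono _ hsub)
      have : (𝓝[Set.Ioo m ξc] m).NeBot := left_nhdsWithin_Ioo_neBot hmlt
      refine le_of_tendsto hmono ?_
      refine eventually_nhdsWithin_of_forall (fun x hx => ?_)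
      rw [slope_def_field]
      apply div_nonpos_of_nonpos_of_nonneg
      · have := A m x hm.1 hx.1.le; linarith
      · linarith [hx.1]
    have := hβ.2 ⟨m, hm, rfl⟩
    linarith
  -- one-sided Lipschitz bound for ψ'
  have hg : MonotoneOn (fun x => psih' x + β * x) (Set.Icc 0 ξc) := by
    apply monotoneOn_of_hasDerivWithinAt_nonneg (convex_Icc 0 ξc)
      (f' := fun x => psih'' x + β)
    · exact (hC1c.mono (fun x hx => hx.1)).add
        ((continuous_const.mul continuous_id).continuousOn)
    · intro x hx
      rw [interior_Icc] at hx ⊢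
      have hlin : HasDerivAt (fun y : ℝ => β * y) β x := by
        simpa using (hasDerivAt_id x).const_mul β
      exact ((hC2 x ⟨hx.1.le, hx.2.le⟩).mono Set.Ioo_subset_Icc_self).add
        hlin.hasDerivWithinAt
    · intro x hx
      rw [interior_Icc] at hx
      have := hβ.2 ⟨x, ⟨hx.1.le, hx.2.le⟩, rfl⟩
      linarith
  have L : ∀ a b : ℝ, 0 ≤ a → a ≤ b → psih' a - psih' b ≤ β * (b - a) := by
    intro a b ha hab
    have hb : (0:ℝ) ≤ b := ha.trans hab
    have ha' : min a ξc ∈ Set.Icc (0:ℝ) ξc := ⟨le_min ha hξc', min_le_right _ _⟩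
    have hb' : min b ξc ∈ Set.Icc (0:ℝ) ξc := ⟨le_min hb hξc', min_le_right _ _⟩
    have h1 : psih' a = psih' (min a ξc) := by
      rcases le_total a ξc with h | h
      · rw [min_eq_left h]
      · rw [min_eq_right h, Z a h, Zc]
    have h2 : psih' b = psih' (min b ξc) := by
      rcases le_total b ξc with h | h
      · rw [min_eq_left h]
      · rw [min_eq_right h, Z b h, Zc]
    have hgle := hg ha' hb' (min_le_min hab le_rfl)
    simp only at hgle
    have hd : min b ξc - min a ξc ≤ b - a := by
      rcases le_total a ξc with h | h
      · rw [min_eq_left h]; linarith [min_le_left b ξc]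
      · rw [min_eq_right h]; linarith [min_le_right b ξc]
    have hβd : β * (min b ξc - min a ξc) ≤ β * (b - a) :=
      mul_le_mul_of_nonneg_left hd hβ0
    rw [h1, h2]
    nlinarith
  -- main case split
  have hc₁nn : 0 ≤ psih' ξ₁ / ξ₁ := div_nonneg (N ξ₁ hξ₁.le) hξ₁.le
  have habs := abs_le.1 hw₁
  by_cases hlt : ξ₁ < ξ₂
  · have hw2 : |w₂| = ξ₂ := hcase hlt
    have hξ₂pos : 0 < ξ₂ := hξ₁.trans hlt
    have key : psih' ξ₂ ≤ psih' ξ₁ / ξ₁ * ξ₂ := by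
      have h1 : psih' ξ₂ ≤ psih' ξ₁ := A ξ₁ ξ₂ hξ₁.le hξ₁₂
      have h2 : psih' ξ₁ ≤ psih' ξ₁ / ξ₁ * ξ₂ := by
        rw [div_mul_eq_mul_div, le_div_iff₀ hξ₁]
        nlinarith [N ξ₁ hξ₁.le]
      linarith
    have hL : psih' ξ₁ - psih' ξ₂ ≤ β * (ξ₂ - ξ₁) := L ξ₁ ξ₂ hξ₁.le hξ₁₂
    have hcw₁ : psih' ξ₁ / ξ₁ * w₁ ≤ psih' ξ₁ := by
      have := mul_le_mul_of_nonneg_left habs.2 hc₁nn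
      rwa [div_mul_cancel₀ _ (ne_of_gt hξ₁)] at this
    have hcw₁' : -(psih' ξ₁) ≤ psih' ξ₁ / ξ₁ * w₁ := by
      have h := mul_le_mul_of_nonneg_left habs.1 hc₁nn
      have h2 : psih' ξ₁ / ξ₁ * -ξ₁ = -psih' ξ₁ := by field_simp
      linarith
    rcases (abs_eq hξ₂pos.le).1 hw2 with h2 | h2
    · subst h2
      have hden : 0 < w₂ - w₁ := by linarith [habs.2]
      have hval : psih' w₂ / w₂ * w₂ = psih' w₂ := div_mul_cancel₀ _ (ne_of_gt hξ₂pos)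
      constructor
      · rw [le_div_iff₀ hden, hval]
        have hβd : β * (w₂ - ξ₁) ≤ β * (w₂ - w₁) :=
          mul_le_mul_of_nonneg_left (by linarith [habs.2]) hβ0
        nlinarith
      · rw [div_le_iff₀ hden, hval]
        nlinarith
    · subst h2
      have hden : -ξ₂ - w₁ < 0 := by linarith [habs.1]
      have hval : psih' ξ₂ / ξ₂ * -ξ₂ = -psih' ξ₂ := by field_simp
      constructor
      · rw [le_div_iff_of_neg hden, hval]
        have hβd : β * (ξ₂ - ξ₁) ≤ β * (ξ₂ + w₁) :=
          mul_le_mul_of_nonneg_left (by linarith [habs.1]) hβ0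
        nlinarith
      · rw [div_le_iff_of_neg hden, hval]
        nlinarith [key]
  · have heq : ξ₂ = ξ₁ := le_antisymm (not_lt.1 hlt) hξ₁₂
    subst heq
    have hne' : w₂ - w₁ ≠ 0 := sub_ne_zero.2 (Ne.symm hne)
    have hval : (psih' ξ₂ / ξ₂ * w₂ - psih' ξ₂ / ξ₂ * w₁) / (w₂ - w₁) = psih' ξ₂ / ξ₂ := by
      rw [show psih' ξ₂ / ξ₂ * w₂ - psih' ξ₂ / ξ₂ * w₁ = psih' ξ₂ / ξ₂ * (w₂ - w₁) by ring,
        mul_div_assoc, div_self hne', mul_one]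
    rw [hval]
    exact ⟨by linarith, le_rfl⟩
end

section
/- Assume (H1) and (H2), and for ξ > 0 set c_ξ := ψ̂'(ξ)/ξ. Let 0 < ξ₁ ≤ ξ₂ and w₁, w₂ ∈ ℝ satisfy |w₁| ≤ ξ₁, |w₂| ≤ ξ₂ and |w₂| > ξ_c, and suppose that w₂ > w₁ if w₂ > 0, and w₂ < w₁ if w₂ < 0. Then (c_{ξ₂}·w₂ − c_{ξ₁}·w₁)/(w₂ − w₁) ≤ ψ̂'(0)/ξ_c. -/
/-- beyond the critical opening, the incremental cohesive stiffness
α = (c_{ξ₂}w₂ − c_{ξ₁}w₁)/(w₂ − w₁), c_ξ = ψ̂'(ξ)/ξ, is bounded above by ψ̂'(0)/ξ_c: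
under (H1), (H2), with 0 < ξ₁ ≤ ξ₂, |w₁| ≤ ξ₁, |w₂| ≤ ξ₂, |w₂| > ξ_c, and
w₁ < w₂ if w₂ > 0, w₂ < w₁ if w₂ < 0. -/
theorem incremental_stiffness_bound_beyond_critical
    (ξc : ℝ) (hξc : 0 < ξc) (psih psih' psih'' : ℝ → ℝ)
    (hnn : ∀ w ≥ (0:ℝ), 0 ≤ psih w)
    (hconc : ConcaveOn ℝ (Set.Ici 0) psih)
    (h0 : psih 0 = 0)
    (hpos : ∀ w > (0:ℝ), 0 < psih w)
    (hconst : ∀ w ≥ ξc, psih w = psih ξc)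
    (hC1 : ∀ w ∈ Set.Ici (0:ℝ), HasDerivWithinAt psih (psih' w) (Set.Ici 0) w)
    (hC1c : ContinuousOn psih' (Set.Ici 0))
    (hC2 : ∀ w ∈ Set.Icc (0:ℝ) ξc, HasDerivWithinAt psih' (psih'' w) (Set.Icc 0 ξc) w)
    (hC2c : ContinuousOn psih'' (Set.Icc 0 ξc))
    (ξ₁ ξ₂ w₁ w₂ : ℝ) (hξ₁ : 0 < ξ₁) (hξ₁₂ : ξ₁ ≤ ξ₂)
    (hw₁ : |w₁| ≤ ξ₁) (hw₂ : |w₂| ≤ ξ₂) (hw₂c : ξc < |w₂|)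
    (hposc : 0 < w₂ → w₁ < w₂) (hnegc : w₂ < 0 → w₂ < w₁) :
    (psih' ξ₂ / ξ₂ * w₂ - psih' ξ₁ / ξ₁ * w₁) / (w₂ - w₁) ≤ psih' 0 / ξc := by
  have habs₁ := abs_le.mp hw₁
  -- derivative is zero beyond ξc
  have hzero : ∀ ξ : ℝ, ξc < ξ → psih' ξ = 0 := by
    intro ξ hξ
    have hξpos : (0:ℝ) < ξ := hξc.trans hξ
    have hev : psih =ᶠ[nhds ξ] fun _ => psih ξc :=
      Filter.eventuallyEq_of_mem (Ioi_mem_nhds hξ) (fun x hx => hconst x (le_of_lt hx))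
    have hd0 : HasDerivAt psih 0 ξ :=
      (hasDerivAt_const ξ (psih ξc)).congr_of_eventuallyEq hev
    exact ((uniqueDiffOn_Ici (0:ℝ)) ξ hξpos.le).eq_deriv _ (hC1 ξ hξpos.le)
      hd0.hasDerivWithinAt
  -- derivative is antitone
  have hanti : ∀ x y : ℝ, 0 ≤ x → x < y → psih' y ≤ psih' x := by
    intro x y hx hxy
    have hy : (0:ℝ) ≤ y := hx.trans hxy.le
    have h1 := hconc.le_slope_of_hasDerivWithinAt hx hy hxy (hC1 y hy)
    have h2 := hconc.slope_le_of_hasDerivWithinAt hx hy hxy (hC1 x hx)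
    linarith
  -- nonnegativity of derivative
  have hnn' : ∀ x : ℝ, 0 ≤ x → 0 ≤ psih' x := by
    intro x hx
    have hlt : x < max x ξc + 1 := lt_of_le_of_lt (le_max_left _ _) (by linarith)
    have hz : psih' (max x ξc + 1) = 0 :=
      hzero _ (lt_of_le_of_lt (le_max_right _ _) (by linarith))
    have := hanti x (max x ξc + 1) hx hlt
    linarith [this, hz.symm ▸ this]
  have hp0 : 0 ≤ psih' 0 := hnn' 0 le_rfl
  have hp1 : 0 ≤ psih' ξ₁ := hnn' ξ₁ hξ₁.le
  have hp10 : psih' ξ₁ ≤ psih' 0 := hanti 0 ξ₁ le_rfl hξ₁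
  have hξ₂c : ξc < ξ₂ := lt_of_lt_of_le hw₂c hw₂
  have hz₂ : psih' ξ₂ = 0 := hzero ξ₂ hξ₂c
  rw [hz₂]
  have hw₂ne : w₂ ≠ 0 := by
    intro h; rw [h, abs_zero] at hw₂c; linarith
  rcases hw₂ne.lt_or_gt with hneg | hpos₂
  · -- w₂ < 0
    have hcw : ξc < -w₂ := by rwa [abs_of_neg hneg] at hw₂c
    have h21 : w₂ < w₁ := hnegc hneg
    have hd : 0 < w₁ - w₂ := by linarith
    have key : psih' ξ₁ * w₁ * ξc ≤ psih' 0 * (w₁ - w₂) * ξ₁ := by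
      rcases le_or_gt w₁ 0 with h | h
      · nlinarith [mul_nonneg (mul_nonneg hp0 hd.le) hξ₁.le, mul_nonneg hp1 hξc.le]
      · nlinarith [mul_nonneg (mul_nonneg (sub_nonneg.mpr hp10) h.le) hξc.le,
          mul_nonneg hp0 (sub_nonneg.mpr habs₁.2),
          mul_nonneg (mul_nonneg hp0 hξ₁.le) (by linarith : (0:ℝ) ≤ w₁ - w₂ - ξc)]
    have hrw : (0 / ξ₂ * w₂ - psih' ξ₁ / ξ₁ * w₁) / (w₂ - w₁)
        = (psih' ξ₁ * w₁ / ξ₁) / (w₁ - w₂) := by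
      rw [zero_div, zero_mul, zero_sub]
      rw [show w₂ - w₁ = -(w₁ - w₂) by ring, div_neg, neg_div, neg_neg,
        div_mul_eq_mul_div]
    rw [hrw, div_le_div_iff₀ hd hξc, div_mul_eq_mul_div, div_le_iff₀ hξ₁]
    nlinarith [key]
  · -- 0 < w₂
    have hcw : ξc < w₂ := by rwa [abs_of_pos hpos₂] at hw₂c
    have h12 : w₁ < w₂ := hposc hpos₂
    have hd : 0 < w₂ - w₁ := by linarith
    have key : psih' ξ₁ * (-w₁) * ξc ≤ psih' 0 * (w₂ - w₁) * ξ₁ := by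
      rcases le_or_gt 0 w₁ with h | h
      · nlinarith [mul_nonneg (mul_nonneg hp0 hd.le) hξ₁.le,
          mul_nonneg (mul_nonneg hp1 h) hξc.le]
      · nlinarith [mul_nonneg (mul_nonneg (sub_nonneg.mpr hp10) (by linarith : (0:ℝ) ≤ -w₁)) hξc.le,
          mul_nonneg hp0 (by linarith [habs₁.1] : (0:ℝ) ≤ ξ₁ + w₁),
          mul_nonneg (mul_nonneg hp0 hξ₁.le) (by linarith : (0:ℝ) ≤ w₂ - w₁ - ξc)]
    have hrw : (0 / ξ₂ * w₂ - psih' ξ₁ / ξ₁ * w₁) / (w₂ - w₁)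
        = (psih' ξ₁ * (-w₁) / ξ₁) / (w₂ - w₁) := by
      rw [zero_div, zero_mul, zero_sub, div_mul_eq_mul_div]
      ring_nf
    rw [hrw, div_le_div_iff₀ hd hξc, div_mul_eq_mul_div, div_le_iff₀ hξ₁]
    nlinarith [key]
end

section
/- Let c_η > 0, β > 0, c̄ ≥ 0 and let τ be a real number with 0 < τ < c_η/(β + c̄). Let α₁, α₂ ∈ ℝ with −β ≤ α₁ ≤ c̄ and −β ≤ α₂ ≤ c̄, and let v₁, v₂ ∈ ℝ. Assume that α₁ ≥ α₂ or v₁·v₂ ≤ 0. Then c_η·(v₂ − v₁)² + τ·α₂·v₂·(v₂ − v₁) ≥ (τ/2)·α₂·v₂² − (τ/2)·α₁·v₁². -/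
/-- the scalar algebraic inequality underlying the discrete energy estimate:
for 0 < τ < c_η/(β + c̄), −β ≤ α₁, α₂ ≤ c̄, and α₁ ≥ α₂ or v₁v₂ ≤ 0,
c_η(v₂ − v₁)² + τα₂v₂(v₂ − v₁) ≥ (τ/2)α₂v₂² − (τ/2)α₁v₁². -/
theorem discrete_velocity_jump_inequality
    (cη β cbar τ α₁ α₂ v₁ v₂ : ℝ)
    (hcη : 0 < cη) (hβ : 0 < β) (hcbar : 0 ≤ cbar)
    (hτ0 : 0 < τ) (hτ : τ < cη / (β + cbar))
    (hα₁l : -β ≤ α₁) (hα₁u : α₁ ≤ cbar)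
    (hα₂l : -β ≤ α₂) (hα₂u : α₂ ≤ cbar)
    (hcase : α₂ ≤ α₁ ∨ v₁ * v₂ ≤ 0) :
    τ / 2 * α₂ * v₂ ^ 2 - τ / 2 * α₁ * v₁ ^ 2 ≤
      cη * (v₂ - v₁) ^ 2 + τ * α₂ * v₂ * (v₂ - v₁) := by
  have hsum : 0 < β + cbar := by linarith
  have hτ' : τ * (β + cbar) < cη := (lt_div_iff₀ hsum).mp hτ
  have hτβ : τ * β < cη := by nlinarith
  rcases hcase with h | h
  · nlinarith [sq_nonneg (v₂ - v₁), sq_nonneg v₁, mul_nonneg hτ0.le (sub_nonneg.mpr h),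
      mul_nonneg hτ0.le (sub_nonneg.mpr hα₂l), mul_le_mul_of_nonneg_left h hτ0.le]
  · nlinarith [sq_nonneg (v₂ - v₁), sq_nonneg v₁, sq_nonneg v₂,
      mul_le_mul_of_nonneg_left h hτ0.le,
      mul_nonneg hτ0.le (sub_nonneg.mpr hα₂l),
      mul_nonneg hτ0.le (sub_nonneg.mpr hα₁l)]
end

section
/- Assume (H1) and (H2) and let ψ be the cohesive density. Let w, ξ : ℝ → ℝ be functions with ξ(s) ≥ 0 and |w(s)| ≤ ξ(s) for all s ∈ ℝ, and with ξ nondecreasing. Let t ∈ ℝ and let w', ξ' ∈ ℝ be such that (w(t+h) − w(t))/h → w' and (ξ(t+h) − ξ(t))/h → ξ' as h → 0⁺. Assume the Karush–Kuhn–Tucker condition ξ'·(ξ(t) − |w(t)|) = 0, and assume that ξ' = |w'| in case ξ(t) = 0. Then the limit lim_{h→0⁺} (ψ(w(t+h), ξ(t+h)) − ψ(w(t), ξ(t)))/h exists and equals: ψ̂'(0)·|w'| if ξ(t) = 0; (ψ̂'(ξ(t))/ξ(t))·w(t)·w' if |w(t)| < ξ(t); and ψ̂'(ξ(t))·sign(w(t))·w'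 if |w(t)| = ξ(t) > 0. -/
open Filter

section Aux

open Asymptotics

private lemma key {E F : Type*} [NormedAddCommGroup E] [NormedSpace ℝ E]
    [NormedAddCommGroup F] [NormedSpace ℝ F]
    (f : E → F) (f' : E →L[ℝ] F) (s : Set E) (p0 : E)
    (hf : HasFDerivWithinAt f f' s p0) (u : ℝ → E)
    (hus : ∀ᶠ h in nhdsWithin (0:ℝ) (Set.Ioi 0), u h ∈ s) (v : E)
    (hu : Tendsto (fun h : ℝ => h⁻¹ • (u h - p0)) (nhdsWithin 0 (Set.Ioi 0)) (nhds v)) :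
    Tendsto (fun h : ℝ => h⁻¹ • (f (u h) - f p0)) (nhdsWithin 0 (Set.Ioi 0)) (nhds (f' v)) := by
  set l := nhdsWithin (0:ℝ) (Set.Ioi 0)
  have hne : ∀ᶠ h : ℝ in l, h ≠ 0 := by
    filter_upwards [self_mem_nhdsWithin] with h hh using ne_of_gt hh
  have hid : Tendsto (fun h : ℝ => h) l (nhds 0) := tendsto_nhdsWithin_of_tendsto_nhds tendsto_id
  have hu0' : Tendsto (fun h : ℝ => u h - p0) l (nhds 0) := by
    have h2 := hid.smul hu
    simp only [zero_smul] at h2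
    refine h2.congr' ?_
    filter_upwards [hne] with h hh
    rw [smul_smul, mul_inv_cancel₀ hh, one_smul]
  have hu0 : Tendsto u l (nhdsWithin p0 s) := by
    refine tendsto_nhdsWithin_of_tendsto_nhds_of_eventually_within _ ?_ hus
    have h3 : Tendsto (fun h : ℝ => (u h - p0) + p0) l (nhds (0 + p0)) :=
      hu0'.add tendsto_const_nhds
    simpa using h3
  have hlo2 : (fun h : ℝ => f (u h) - f p0 - f' (u h - p0)) =o[l] (fun h => u h - p0) :=
    hf.isLittleO.comp_tendsto hu0
  have hO : (fun h : ℝ => u h - p0) =O[l] (fun h : ℝ => h) := by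
    have h1 : (fun h : ℝ => h⁻¹ • (u h - p0)) =O[l] (fun _ => (1:ℝ)) := hu.isBigO_one ℝ
    have h2 := (isBigO_refl (fun h : ℝ => h) l).smul h1
    refine (IsBigO.congr' h2 ?_ ?_)
    · filter_upwards [hne] with h hh
      rw [smul_smul, mul_inv_cancel₀ hh, one_smul]
    · filter_upwards with h
      simp
  have h4 : Tendsto (fun h : ℝ => h⁻¹ • (f (u h) - f p0 - f' (u h - p0))) l (nhds 0) :=
    (hlo2.trans_isBigO hO).tendsto_inv_smul_nhds_zero
  have h5 : Tendsto (fun h : ℝ => f' (h⁻¹ • (u h - p0))) l (nhds (f' v)) :=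
    (f'.continuous.tendsto v).comp hu
  have h6 := h4.add h5
  rw [zero_add] at h6
  refine h6.congr fun h => ?_
  simp only [map_smul, map_sub, smul_sub]
  abel

private lemma key1 (f : ℝ → ℝ) (d : ℝ) (s : Set ℝ) (p0 : ℝ)
    (hf : HasDerivWithinAt f d s p0) (u : ℝ → ℝ)
    (hus : ∀ᶠ h in nhdsWithin (0:ℝ) (Set.Ioi 0), u h ∈ s) (v : ℝ)
    (hu : Tendsto (fun h : ℝ => (u h - p0) / h) (nhdsWithin 0 (Set.Ioi 0)) (nhds v)) :
    Tendsto (fun h : ℝ => (f (u h) - f p0) / h) (nhdsWithin 0 (Set.Ioi 0)) (nhds (v * d)) := by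
  have hu' : Tendsto (fun h : ℝ => h⁻¹ • (u h - p0)) (nhdsWithin 0 (Set.Ioi 0)) (nhds v) := by
    refine hu.congr fun h => ?_
    rw [smul_eq_mul, div_eq_inv_mul]
  have := key f (ContinuousLinearMap.smulRight (1 : ℝ →L[ℝ] ℝ) d) s p0 hf.hasFDerivWithinAt
    u hus v hu'
  simp only [ContinuousLinearMap.smulRight_apply, ContinuousLinearMap.one_apply,
    smul_eq_mul] at this
  refine this.congr fun h => ?_
  rw [← div_eq_inv_mul]

private lemma tendsto_pt (g : ℝ → ℝ) (t c v : ℝ)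
    (hg : Tendsto (fun h : ℝ => (g (t + h) - c) / h) (nhdsWithin 0 (Set.Ioi 0)) (nhds v)) :
    Tendsto (fun h : ℝ => g (t + h)) (nhdsWithin 0 (Set.Ioi 0)) (nhds c) := by
  set l := nhdsWithin (0:ℝ) (Set.Ioi 0)
  have hne : ∀ᶠ h : ℝ in l, h ≠ 0 := by
    filter_upwards [self_mem_nhdsWithin] with h hh using ne_of_gt hh
  have hid : Tendsto (fun h : ℝ => h) l (nhds 0) := tendsto_nhdsWithin_of_tendsto_nhds tendsto_id
  have h2 := hid.mul hg
  simp only [zero_mul] at h2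
  have h3 : Tendsto (fun h : ℝ => (g (t + h) - c) + c) l (nhds (0 + c)) := by
    refine Tendsto.add ?_ tendsto_const_nhds
    refine h2.congr' ?_
    filter_upwards [hne] with h hh
    field_simp
  simpa using h3

private lemma psihd_zero (ξc : ℝ) (hξc : 0 < ξc) (psih psih' : ℝ → ℝ)
    (hconst : ∀ s ≥ ξc, psih s = psih ξc)
    (hC1 : ∀ s ∈ Set.Ici (0:ℝ), HasDerivWithinAt psih (psih' s) (Set.Ici 0) s)
    (hC1c : ContinuousOn psih' (Set.Ici 0)) :
    ∀ s ≥ ξc, psih' s = 0 := by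
  have hgt : ∀ s, ξc < s → psih' s = 0 := by
    intro s hs
    have hs0 : (0:ℝ) < s := lt_trans hξc hs
    have h1 : HasDerivAt psih (psih' s) s :=
      (hC1 s (le_of_lt hs0)).hasDerivAt (Ici_mem_nhds hs0)
    have heq : psih =ᶠ[nhds s] fun _ => psih ξc := by
      filter_upwards [Ioi_mem_nhds hs] with x hx using hconst x (le_of_lt hx)
    have h2 : HasDerivAt psih 0 s :=
      (hasDerivAt_const s (psih ξc)).congr_of_eventuallyEq heq
    exact h1.unique h2
  intro s hs
  rcases eq_or_lt_of_le hs with heq | hlt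
  · subst heq
    have hcw : Tendsto psih' (nhdsWithin ξc (Set.Ioi ξc)) (nhds (psih' ξc)) :=
      (hC1c ξc hξc.le).mono (fun x hx => le_of_lt (lt_trans hξc hx))
    have hz2 : Tendsto psih' (nhdsWithin ξc (Set.Ioi ξc)) (nhds 0) := by
      refine tendsto_const_nhds.congr' ?_
      filter_upwards [self_mem_nhdsWithin] with x hx
      exact (hgt x hx).symm
    exact tendsto_nhds_unique hcw hz2
  · exact hgt s hlt

private lemma G_fderiv (psih psih' psih'' : ℝ → ℝ) (a b : ℝ) (hb : 0 < b)
    (h1 : HasDerivAt psih (psih' b) b) (h2 : HasDerivAt psih' (psih'' b) b) :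
    ∃ D : ℝ × ℝ →L[ℝ] ℝ,
      HasFDerivAt (fun p : ℝ × ℝ => psih p.2 - psih' p.2 * ((p.2 ^ 2 - p.1 ^ 2) / (2 * p.2)))
        D (a, b) ∧ ∀ w' z' : ℝ, D (w', z') =
          psih' b / b * a * w' +
          (psih' b - psih'' b * ((b^2 - a^2)/(2*b)) - psih' b * ((b^2 + a^2)/(2*b^2))) * z' := by
  have hsnd : HasFDerivAt (fun p : ℝ × ℝ => p.2) (ContinuousLinearMap.snd ℝ ℝ ℝ) (a, b) :=
    hasFDerivAt_snd
  have hfst : HasFDerivAt (fun p : ℝ × ℝ => p.1) (ContinuousLinearMap.fst ℝ ℝ ℝ) (a, b) :=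
    hasFDerivAt_fst
  have hps : HasFDerivAt (fun p : ℝ × ℝ => psih p.2)
      (psih' b • ContinuousLinearMap.snd ℝ ℝ ℝ) (a, b) := h1.comp_hasFDerivAt _ hsnd
  have hps' : HasFDerivAt (fun p : ℝ × ℝ => psih' p.2)
      (psih'' b • ContinuousLinearMap.snd ℝ ℝ ℝ) (a, b) := h2.comp_hasFDerivAt _ hsnd
  have h2b : HasFDerivAt (fun p : ℝ × ℝ => 2 * p.2)
      ((2:ℝ) • ContinuousLinearMap.snd ℝ ℝ ℝ) (a, b) := hsnd.const_mul 2
  have hinvd : HasDerivAt (fun y : ℝ => y⁻¹) (-((2*b)^2)⁻¹) (2*b) :=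
    hasDerivAt_inv (by positivity)
  have hinv : HasFDerivAt (fun p : ℝ × ℝ => (2 * p.2)⁻¹)
      ((-((2*b)^2)⁻¹) • ((2:ℝ) • ContinuousLinearMap.snd ℝ ℝ ℝ)) (a, b) :=
    HasDerivAt.comp_hasFDerivAt (a, b) hinvd h2b
  have hnum : HasFDerivAt (fun p : ℝ × ℝ => p.2 * p.2 - p.1 * p.1)
      ((b • ContinuousLinearMap.snd ℝ ℝ ℝ + b • ContinuousLinearMap.snd ℝ ℝ ℝ) -
       (a • ContinuousLinearMap.fst ℝ ℝ ℝ + a • ContinuousLinearMap.fst ℝ ℝ ℝ)) (a, b) :=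
    (hsnd.mul hsnd).sub (hfst.mul hfst)
  have hfrac := hnum.mul hinv
  have hprod := hps'.mul hfrac
  have hG := hps.sub hprod
  have hfun : (fun p : ℝ × ℝ => psih p.2 - psih' p.2 * ((p.2 ^ 2 - p.1 ^ 2) / (2 * p.2)))
      = (fun x : ℝ × ℝ => psih x.2 - psih' x.2 * ((x.2 * x.2 - x.1 * x.1) * (2 * x.2)⁻¹)) := by
    funext p
    rw [div_eq_mul_inv, pow_two, pow_two]
  rw [hfun]
  refine ⟨_, hG, ?_⟩
  intro w' z'
  simp only [ContinuousLinearMap.sub_apply, ContinuousLinearMap.add_apply,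
    ContinuousLinearMap.smul_apply, ContinuousLinearMap.coe_snd', ContinuousLinearMap.coe_fst',
    smul_eq_mul, Pi.mul_apply]
  field_simp
  ring

end Aux

private lemma cohesive_eq_G (psih psih' : ℝ → ℝ) (w0 ξ0 : ℝ) (h1 : 0 < ξ0) (h2 : |w0| ≤ ξ0) :
    cohesive psih psih' w0 ξ0 = psih ξ0 - psih' ξ0 * ((ξ0 ^ 2 - w0 ^ 2) / (2 * ξ0)) := by
  unfold cohesive
  split_ifs with h3
  · have heq : |w0| = ξ0 := le_antisymm h2 h3
    have hw2 : w0 ^ 2 = ξ0 ^ 2 := by rw [← sq_abs, heq]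
    rw [heq, hw2]
    simp
  · rfl

/-- chain rule for the cohesive density along an evolution satisfying the
Karush–Kuhn–Tucker conditions: the right derivative of t ↦ ψ(w(t),ξ(t)) exists and equals
ψ̂'(0)·|w'| if ξ(t) = 0, (ψ̂'(ξ(t))/ξ(t))·w(t)·w' if |w(t)| < ξ(t), and
ψ̂'(ξ(t))·sign(w(t))·w' if |w(t)| = ξ(t) > 0. -/
theorem cohesive_chain_rule
    (ξc : ℝ) (hξc : 0 < ξc) (psih psih' psih'' : ℝ → ℝ)
    (hnn : ∀ s ≥ (0:ℝ), 0 ≤ psih s)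
    (hconc : ConcaveOn ℝ (Set.Ici 0) psih)
    (h0 : psih 0 = 0)
    (hpos : ∀ s > (0:ℝ), 0 < psih s)
    (hconst : ∀ s ≥ ξc, psih s = psih ξc)
    (hC1 : ∀ s ∈ Set.Ici (0:ℝ), HasDerivWithinAt psih (psih' s) (Set.Ici 0) s)
    (hC1c : ContinuousOn psih' (Set.Ici 0))
    (hC2 : ∀ s ∈ Set.Icc (0:ℝ) ξc, HasDerivWithinAt psih' (psih'' s) (Set.Icc 0 ξc) s)
    (hC2c : ContinuousOn psih'' (Set.Icc 0 ξc))
    (w z : ℝ → ℝ)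
    (hznn : ∀ s : ℝ, 0 ≤ z s)
    (hcone : ∀ s : ℝ, |w s| ≤ z s)
    (hmono : Monotone z)
    (t w' z' : ℝ)
    (hw' : Tendsto (fun h : ℝ => (w (t + h) - w t) / h)
      (nhdsWithin 0 (Set.Ioi 0)) (nhds w'))
    (hz' : Tendsto (fun h : ℝ => (z (t + h) - z t) / h)
      (nhdsWithin 0 (Set.Ioi 0)) (nhds z'))
    (hKKT : z' * (z t - |w t|) = 0)
    (hzero : z t = 0 → z' = |w'|) :
    Tendsto (fun h : ℝ =>
        (cohesive psih psih' (w (t + h)) (z (t + h)) -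
          cohesive psih psih' (w t) (z t)) / h)
      (nhdsWithin 0 (Set.Ioi 0))
      (nhds (if z t = 0 then psih' 0 * |w'|
        else if |w t| < z t then psih' (z t) / z t * w t * w'
        else psih' (z t) * Real.sign (w t) * w')) := by
  by_cases hb0 : z t = 0
  -- ===================== Case z t = 0 =====================
  · rw [if_pos hb0]
    have hw0 : w t = 0 := by
      have h1 := hcone t
      rw [hb0] at h1
      exact abs_eq_zero.mp (le_antisymm h1 (abs_nonneg _))
    have hzeq : z' = |w'| := hzero hb0
    set Q : ℝ → ℝ := fun h =>
      if z (t+h) ≤ |w (t+h)| then 0 else (z (t+h)^2 - w (t+h)^2)/(2 * z (t+h)) with hQdef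
    have hrep : ∀ h : ℝ, cohesive psih psih' (w (t+h)) (z (t+h))
        = psih (z (t+h)) - psih' (z (t+h)) * Q h := by
      intro h
      unfold cohesive
      rw [hQdef]
      dsimp only
      by_cases hc : z (t+h) ≤ |w (t+h)|
      · have heq : |w (t+h)| = z (t+h) := le_antisymm (hcone _) hc
        rw [if_pos hc, if_pos hc, heq]
        ring
      · rw [if_neg hc, if_neg hc]
    have hF0 : cohesive psih psih' (w t) (z t) = 0 := by
      unfold cohesive
      rw [hw0, abs_zero, hb0, if_pos le_rfl, h0]
    -- limit of (psih (z (t+h)) - psih (z t)) / h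
    have hd : HasDerivWithinAt psih (psih' (z t)) (Set.Ici 0) (z t) := hC1 (z t) (hznn t)
    have T1 : Tendsto (fun h : ℝ => (psih (z (t+h)) - psih (z t)) / h)
        (nhdsWithin 0 (Set.Ioi 0)) (nhds (z' * psih' (z t))) :=
      key1 psih (psih' (z t)) (Set.Ici 0) (z t) hd (fun h => z (t+h))
        (by filter_upwards with h using hznn (t+h)) z' hz'
    -- continuity of psih' along z(t+·)
    have hzc : Tendsto (fun h : ℝ => z (t+h)) (nhdsWithin 0 (Set.Ioi 0)) (nhds (z t)) :=
      tendsto_pt z t (z t) z' hz'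
    have hzcw : Tendsto (fun h : ℝ => z (t+h)) (nhdsWithin 0 (Set.Ioi 0))
        (nhdsWithin (z t) (Set.Ici 0)) :=
      tendsto_nhdsWithin_of_tendsto_nhds_of_eventually_within _ hzc
        (by filter_upwards with h using hznn (t+h))
    have T2 : Tendsto (fun h : ℝ => psih' (z (t+h))) (nhdsWithin 0 (Set.Ioi 0))
        (nhds (psih' (z t))) := (hC1c (z t) (hznn t)).tendsto.comp hzcw
    -- squeeze for Q h / h
    have hQ0 : ∀ h : ℝ, 0 ≤ Q h := by
      intro h
      rw [hQdef]
      dsimp only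
      split_ifs with hc
      · exact le_rfl
      · push_neg at hc
        have hzpos : 0 < z (t+h) := lt_of_le_of_lt (abs_nonneg _) hc
        apply div_nonneg _ (by positivity)
        have : w (t+h)^2 ≤ z (t+h)^2 := by
          rw [← sq_abs (w (t+h))]
          exact pow_le_pow_left₀ (abs_nonneg _) hc.le 2
        linarith
    have hQle : ∀ h : ℝ, Q h ≤ z (t+h) - |w (t+h)| := by
      intro h
      rw [hQdef]
      dsimp only
      split_ifs with hc
      · linarith [hcone (t+h)]
      · push_neg at hc
        have hzpos : 0 < z (t+h) := lt_of_le_of_lt (abs_nonneg _) hc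
        rw [div_le_iff₀ (by positivity)]
        have h1 : z (t+h)^2 - w (t+h)^2 = (z (t+h) - |w (t+h)|) * (z (t+h) + |w (t+h)|) := by
          rw [← sq_abs (w (t+h))]
          ring
        rw [h1]
        have h2 : z (t+h) + |w (t+h)| ≤ 2 * z (t+h) := by linarith [hcone (t+h)]
        have h3 : 0 ≤ z (t+h) - |w (t+h)| := by linarith [hcone (t+h)]
        nlinarith
    have habs : Tendsto (fun h : ℝ => (|w (t+h)| - |w t|) / h)
        (nhdsWithin 0 (Set.Ioi 0)) (nhds |w'|) := by
      have h1 := hw'.abs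
      refine h1.congr' ?_
      filter_upwards [self_mem_nhdsWithin] with h hh
      rw [hw0, abs_zero, sub_zero, sub_zero, abs_div, abs_of_pos (show (0:ℝ) < h from hh)]
    have hub : Tendsto (fun h : ℝ => (z (t+h) - |w (t+h)|) / h)
        (nhdsWithin 0 (Set.Ioi 0)) (nhds 0) := by
      have h1 := hz'.sub habs
      have h2 : z' - |w'| = 0 := by rw [hzeq]; ring
      rw [h2] at h1
      refine h1.congr fun h => ?_
      rw [hw0, abs_zero, sub_zero, hb0, sub_zero]
      ring
    have T3 : Tendsto (fun h : ℝ => Q h / h) (nhdsWithin 0 (Set.Ioi 0)) (nhds 0) := by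
      refine tendsto_of_tendsto_of_tendsto_of_le_of_le' tendsto_const_nhds hub ?_ ?_
      · filter_upwards [self_mem_nhdsWithin] with h hh
        exact div_nonneg (hQ0 h) (le_of_lt hh)
      · filter_upwards [self_mem_nhdsWithin] with h hh
        exact (div_le_div_iff_of_pos_right hh).mpr (hQle h)
    have hcomb := T1.sub (T2.mul T3)
    have hval : z' * psih' (z t) - psih' (z t) * 0 = psih' 0 * |w'| := by
      rw [hzeq, hb0]; ring
    rw [hval] at hcomb
    refine hcomb.congr fun h => ?_
    rw [hrep h, hF0, hb0, h0]
    ring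
  -- ===================== Case z t > 0 =====================
  · have hbpos : 0 < z t := (hznn t).lt_of_ne (Ne.symm hb0)
    rw [if_neg hb0]
    by_cases hbc : ξc ≤ z t
    -- ---------- Subcase z t ≥ ξc : everything constant ----------
    · have hd0 := psihd_zero ξc hξc psih psih' hconst hC1 hC1c
      have hcc : ∀ w0 ξ0, ξc ≤ ξ0 → |w0| ≤ ξ0 → cohesive psih psih' w0 ξ0 = psih ξc := by
        intro w0 ξ0 h1 h2
        unfold cohesive
        split_ifs with h3
        · exact hconst _ (le_trans h1 h3)
        · rw [hd0 ξ0 h1, hconst ξ0 h1]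
          ring
      have htz : psih' (z t) = 0 := hd0 _ hbc
      have hval : (if |w t| < z t then psih' (z t) / z t * w t * w'
          else psih' (z t) * Real.sign (w t) * w') = 0 := by
        split_ifs <;> rw [htz] <;> ring
      rw [hval]
      refine Tendsto.congr' ?_ (tendsto_const_nhds (α := ℝ) (f := nhdsWithin (0:ℝ) (Set.Ioi 0)))
      filter_upwards [self_mem_nhdsWithin] with h hh
      have h1 : ξc ≤ z (t+h) := le_trans hbc (hmono (by have := Set.mem_Ioi.mp hh; linarith : t ≤ t + h))
      rw [hcc _ _ h1 (hcone _), hcc _ _ hbc (hcone t), sub_self, zero_div]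
    -- ---------- Subcase 0 < z t < ξc ----------
    · push_neg at hbc
      have hps_b : HasDerivAt psih (psih' (z t)) (z t) :=
        (hC1 (z t) hbpos.le).hasDerivAt (Ici_mem_nhds hbpos)
      have hps'_b : HasDerivAt psih' (psih'' (z t)) (z t) :=
        (hC2 (z t) ⟨hbpos.le, hbc.le⟩).hasDerivAt (Icc_mem_nhds hbpos hbc)
      obtain ⟨D, hG, hDval⟩ := G_fderiv psih psih' psih'' (w t) (z t) hbpos hps_b hps'_b
      have hu : Tendsto (fun h : ℝ => h⁻¹ • ((w (t+h), z (t+h)) - ((w t, z t) : ℝ × ℝ)))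
          (nhdsWithin 0 (Set.Ioi 0)) (nhds (w', z')) := by
        have hw2 : Tendsto (fun h : ℝ => h⁻¹ * (w (t+h) - w t)) (nhdsWithin 0 (Set.Ioi 0))
            (nhds w') := hw'.congr fun h => div_eq_inv_mul _ _
        have hz2 : Tendsto (fun h : ℝ => h⁻¹ * (z (t+h) - z t)) (nhdsWithin 0 (Set.Ioi 0))
            (nhds z') := hz'.congr fun h => div_eq_inv_mul _ _
        have := hw2.prodMk_nhds hz2
        refine this.congr fun h => ?_
        simp [Prod.smul_def, Prod.sub_def, smul_eq_mul]
      have hkey := key _ D Set.univ ((w t, z t) : ℝ × ℝ) hG.hasFDerivWithinAt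
        (fun h => (w (t+h), z (t+h))) (by filter_upwards with h using trivial) (w', z') hu
      have hDtgt : D (w', z') = (if |w t| < z t then psih' (z t) / z t * w t * w'
          else psih' (z t) * Real.sign (w t) * w') := by
        by_cases hlt : |w t| < z t
        · rw [if_pos hlt, hDval]
          have hz0 : z' = 0 := by
            rcases mul_eq_zero.mp hKKT with h1 | h1
            · exact h1
            · exfalso; linarith
          rw [hz0]
          ring
        · rw [if_neg hlt]
          have heq : |w t| = z t := le_antisymm (hcone t) (not_lt.mp hlt)
          have ha0 : w t ≠ 0 := by
            intro hh
            rw [hh, abs_zero] at heq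
            exact hb0 heq.symm
          rcases lt_or_gt_of_ne ha0 with hneg | hposa
          · have haw : w t = -(z t) := by
              rw [abs_of_neg hneg] at heq
              linarith
            rw [hDval, Real.sign_of_neg hneg, haw]
            field_simp
            ring
          · have haw : w t = z t := by
              rw [abs_of_pos hposa] at heq
              exact heq
            rw [hDval, Real.sign_of_pos hposa, haw]
            field_simp
            ring
      rw [← hDtgt]
      refine hkey.congr' ?_
      filter_upwards [self_mem_nhdsWithin] with h hh
      have hz1 : 0 < z (t+h) := lt_of_lt_of_le hbpos (hmono (by have := Set.mem_Ioi.mp hh; linarith : t ≤ t + h))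
      rw [cohesive_eq_G psih psih' _ _ hz1 (hcone _), cohesive_eq_G psih psih' _ _ hbpos (hcone t)]
      rw [smul_eq_mul]
      exact (div_eq_inv_mul _ _).symm
end
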